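/- arXiv:2402.12615 — 6 statements merged into one kernel-verified Lean document; each statement's English description precedes it below -/
import Mathlib

section
/- Let F be a linear space of 𝕂-valued functions on a non-empty set Ω, Y a locally convex Hausdorff space over 𝕂, and δ : Ω → Y a map. Consider the conditions: (i) for every continuous linear functional y' ∈ Y' one has y' ∘ δ ∈ F; (ii) for every f ∈ F there is a unique continuous linear functional T_f ∈ Y' such that T_f ∘ δ = f. Then: (a) if (ii) holds, the map T : F → Y', T(f) = T_f, is linear and injective; (b) if both (i) and (ii) hold, then T is a linear bijection of F onto Y', its inverse is given by T⁻¹(y') = y' ∘ δ for all y' ∈ Y', the triple (δ, Y, T) is a linearisation of F, and the linear span of {δ(x) | x ∈ Ω} is dense in Y. -/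
open Topology Filter Set

universe u v w

section Defs

variable (𝕜 : Type u) [RCLike 𝕜]
variable (X : Type v) [AddCommGroup X] [Module 𝕜 X] [Module ℝ X] [IsScalarTower ℝ 𝕜 X]

/-- von Neumann boundedness with respect to an explicit topology. -/
def VNB (t : TopologicalSpace X) (s : Set X) : Prop :=
  @Bornology.IsVonNBounded 𝕜 X _ _ _ t s

/-- `t` makes `X` a locally convex Hausdorff topological vector space over `𝕜`. -/
structure IsLCH (t : TopologicalSpace X) : Prop where
  tag : @IsTopologicalAddGroup X t _
  csmul : @ContinuousSMul 𝕜 X _ _ t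
  t2 : @T2Space X t
  lcs : @LocallyConvexSpace ℝ X _ _ _ _ t

/-- Absolutely convex set: balanced and convex. -/
def AbsConvexS (s : Set X) : Prop := Balanced 𝕜 s ∧ Convex ℝ s

/-- Condition (BBC): every `t`-bounded set is contained in an absolutely convex
`t`-bounded `tt`-compact set. -/
def BBC (t tt : TopologicalSpace X) : Prop :=
  ∀ s : Set X, VNB 𝕜 X t s →
    ∃ B : Set X, s ⊆ B ∧ AbsConvexS 𝕜 X B ∧ VNB 𝕜 X t B ∧ @IsCompact X tt B

/-- Condition (BBCl): every `t`-bounded set is contained in an absolutely convex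
`t`-bounded `tt`-closed set. -/
def BBCl (t tt : TopologicalSpace X) : Prop :=
  ∀ s : Set X, VNB 𝕜 X t s →
    ∃ B : Set X, s ⊆ B ∧ AbsConvexS 𝕜 X B ∧ VNB 𝕜 X t B ∧ @IsClosed X tt B

/-- Condition (CNC): `t` has a 0-neighbourhood basis of absolutely convex `tt`-closed sets. -/
def CNC (t tt : TopologicalSpace X) : Prop :=
  ∀ U ∈ @nhds X t 0, ∃ V ∈ @nhds X t 0, V ⊆ U ∧ AbsConvexS 𝕜 X V ∧ @IsClosed X tt V

/-- `g` and `tt` induce the same subspace topology on every `t`-bounded set. -/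
def AgreeOnBounded (t tt g : TopologicalSpace X) : Prop :=
  ∀ s : Set X, VNB 𝕜 X t s →
    TopologicalSpace.induced ((↑) : s → X) g = TopologicalSpace.induced ((↑) : s → X) tt

/-- `g` is the finest locally convex Hausdorff topology on `X` coinciding with `tt` on
`t`-bounded sets. -/
def IsGamma (t tt g : TopologicalSpace X) : Prop :=
  IsLCH 𝕜 X g ∧ AgreeOnBounded 𝕜 X t tt g ∧
    ∀ g' : TopologicalSpace X, IsLCH 𝕜 X g' → AgreeOnBounded 𝕜 X t tt g' → g ≤ g'

/-- Semi-Montel: every bounded set is relatively compact. -/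
def SemiMontel (t : TopologicalSpace X) : Prop :=
  ∀ s : Set X, VNB 𝕜 X t s → @IsCompact X t (@closure X t s)

/-- Barrelled: every barrel is a 0-neighbourhood. -/
def BarrelledTop (t : TopologicalSpace X) : Prop :=
  ∀ B : Set X, @IsClosed X t B → AbsConvexS 𝕜 X B → Absorbent 𝕜 B → B ∈ @nhds X t 0

/-- Quasi-barrelled: every bornivorous barrel is a 0-neighbourhood. -/
def QuasiBarrelledTop (t : TopologicalSpace X) : Prop :=
  ∀ B : Set X, @IsClosed X t B → AbsConvexS 𝕜 X B →
    (∀ s : Set X, VNB 𝕜 X t s → Absorbs 𝕜 B s) → B ∈ @nhds X t 0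

/-- Completeness of a topological abelian group topology (w.r.t. its canonical uniformity). -/
def CompleteTop (t : TopologicalSpace X) : Prop :=
  ∃ h : @IsTopologicalAddGroup X t _,
    @CompleteSpace X (@IsTopologicalAddGroup.rightUniformSpace X _ t h)

/-- Quasi-completeness: every closed bounded set is complete. -/
def QuasiCompleteTop (t : TopologicalSpace X) : Prop :=
  ∃ h : @IsTopologicalAddGroup X t _,
    ∀ s : Set X, @IsClosed X t s → VNB 𝕜 X t s →
      @IsComplete X (@IsTopologicalAddGroup.rightUniformSpace X _ t h) s

/-- Bornological: every bounded linear map into a locally convex Hausdorff space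
is continuous. -/
def Bornological (t : TopologicalSpace X) : Prop :=
  ∀ (Y : Type w) (_ : AddCommGroup Y) (_ : Module 𝕜 Y) (_ : Module ℝ Y)
    (_ : IsScalarTower ℝ 𝕜 Y) (tY : TopologicalSpace Y), IsLCH 𝕜 Y tY →
    ∀ f : X →ₗ[𝕜] Y, (∀ s : Set X, VNB 𝕜 X t s → VNB 𝕜 Y tY (f '' s)) →
      @Continuous X Y t tY f

/-- The norm `N` induces the topology `t`. -/
def InducedByNorm (t : TopologicalSpace X) (N : Seminorm 𝕜 X) : Prop :=
  (∀ x : X, N x = 0 → x = 0) ∧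
    (@nhds X t 0).HasBasis (fun ε : ℝ => 0 < ε) (fun ε => {x : X | N x < ε})

/-- The topological dual of `(X, t)` as a submodule of the space of linear functionals. -/
def dualSub (t : TopologicalSpace X) : Submodule 𝕜 (X →ₗ[𝕜] 𝕜) where
  carrier := {f : X →ₗ[𝕜] 𝕜 | @Continuous X 𝕜 t _ f}
  add_mem' := by
    intro f g hf hg
    letI := t
    exact (Continuous.add hf hg : Continuous fun x => f x + g x)
  zero_mem' := by
    letI := t
    exact (continuous_const : Continuous fun _ : X => (0 : 𝕜))
  smul_mem' := by
    intro c f hf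
    letI := t
    exact (Continuous.const_smul hf c : Continuous fun x => c • f x)

/-- Topology of uniform convergence on the members of `𝔖` on the function space `X → 𝕜`. -/
def funUC (𝔖 : Set (Set X)) : TopologicalSpace (X → 𝕜) :=
  TopologicalSpace.induced (UniformOnFun.ofFun 𝔖) (UniformOnFun.topologicalSpace X 𝕜 𝔖)

/-- Topology on the dual of `(X, t)` of uniform convergence on the members of `𝔖`. -/
def dualTopOn (t : TopologicalSpace X) (𝔖 : Set (Set X)) :
    TopologicalSpace ↥(dualSub 𝕜 X t) :=
  TopologicalSpace.induced (fun f => ((f : X →ₗ[𝕜] 𝕜) : X → 𝕜)) (funUC 𝕜 X 𝔖)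

/-- The strong topology `β(X', X)` on the dual of `(X, t)`. -/
def strongDualTop (t : TopologicalSpace X) : TopologicalSpace ↥(dualSub 𝕜 X t) :=
  dualTopOn 𝕜 X t {s : Set X | VNB 𝕜 X t s}

/-- The space `X'_{B,tt}` of linear functionals whose restriction to every `t`-bounded
set is `tt`-continuous. -/
def bdual (t tt : TopologicalSpace X) : Submodule 𝕜 (X →ₗ[𝕜] 𝕜) where
  carrier := {f : X →ₗ[𝕜] 𝕜 | ∀ s : Set X, VNB 𝕜 X t s → @ContinuousOn X 𝕜 tt _ f s}
  add_mem' := by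
    intro f g hf hg s hs
    letI := tt
    exact (hf s hs).add (hg s hs)
  zero_mem' := by
    intro s hs
    letI := tt
    exact continuousOn_const
  smul_mem' := by
    intro c f hf s hs
    letI := tt
    exact (hf s hs).const_smul c

/-- The topology `β` of uniform convergence on `t`-bounded sets on `X'_{B,tt}`. -/
def bdualTop (t tt : TopologicalSpace X) : TopologicalSpace ↥(bdual 𝕜 X t tt) :=
  TopologicalSpace.induced (fun f => ((f : X →ₗ[𝕜] 𝕜) : X → 𝕜))
    (funUC 𝕜 X {s : Set X | VNB 𝕜 X t s})

/-- The weak topology `σ(X, (X,tt)')` on `X`. -/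
def weakTopOf (tt : TopologicalSpace X) : TopologicalSpace X :=
  TopologicalSpace.induced
    (fun x => (fun f : ↥(dualSub 𝕜 X tt) => (f : X →ₗ[𝕜] 𝕜) x)) Pi.topologicalSpace

/-- Semi-reflexivity of `(X, g)`: every strongly continuous linear functional on the dual
is an evaluation. -/
def SemiReflexiveTop (g : TopologicalSpace X) : Prop :=
  ∀ F : ↥(dualSub 𝕜 X g) →ₗ[𝕜] 𝕜, @Continuous _ _ (strongDualTop 𝕜 X g) _ F →
    ∃ x : X, ∀ f : ↥(dualSub 𝕜 X g), F f = (f : X →ₗ[𝕜] 𝕜) x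

end Defs

section TopIso

variable (𝕜 : Type u) [RCLike 𝕜]

/-- `e` is a topological isomorphism from `(A, tA)` to `(B, tB)`. -/
def IsTopIso {A : Type*} {B : Type*} [AddCommGroup A] [Module 𝕜 A] [AddCommGroup B]
    [Module 𝕜 B] (tA : TopologicalSpace A) (tB : TopologicalSpace B) (e : A ≃ₗ[𝕜] B) : Prop :=
  @Continuous A B tA tB e ∧ @Continuous B A tB tA e.symm

end TopIso

section Extra

variable (𝕜 : Type u) [RCLike 𝕜]

/-- Point evaluation functional on a space of functions. -/
def evalLM {Ω : Type w} (F : Submodule 𝕜 (Ω → 𝕜)) (x : Ω) : ↥F →ₗ[𝕜] 𝕜 where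
  toFun f := (f : Ω → 𝕜) x
  map_add' _ _ := rfl
  map_smul' _ _ := rfl

/-- The topology of pointwise convergence on a space of functions. -/
def ptwiseTop {Ω : Type w} (F : Submodule 𝕜 (Ω → 𝕜)) : TopologicalSpace ↥F :=
  TopologicalSpace.induced ((↑) : ↥F → (Ω → 𝕜)) Pi.topologicalSpace

/-- Packaging of a candidate (pre)dual space: a type together with module and
topological data. -/
structure DualRep (𝕜 : Type u) [RCLike 𝕜] (X : Type v) [AddCommGroup X] [Module 𝕜 X] where
  Y : Type (max u v)
  [addgrp : AddCommGroup Y]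
  [mod : Module 𝕜 Y]
  [modR : Module ℝ Y]
  [tower : IsScalarTower ℝ 𝕜 Y]
  tY : TopologicalSpace Y

attribute [instance] DualRep.addgrp DualRep.mod DualRep.modR DualRep.tower

end Extra

/-- Properties of the map `T` associated with a tuple `(δ, Y)`:
(a) condition (ii) makes any such `T` linear and injective; (b) conditions (i) and (ii)
make it bijective with inverse `y' ↦ y' ∘ δ`, and the span of the range of `δ` is dense. -/
theorem statement1 {𝕜 : Type u} [RCLike 𝕜] {Ω : Type w} [Nonempty Ω]
    (F : Submodule 𝕜 (Ω → 𝕜))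
    {Y : Type v} [AddCommGroup Y] [Module 𝕜 Y] [Module ℝ Y] [IsScalarTower ℝ 𝕜 Y]
    (tY : TopologicalSpace Y) (hY : IsLCH 𝕜 Y tY) (δ : Ω → Y) :
    -- (a)
    ((∀ f : ↥F, ∃! T : ↥(dualSub 𝕜 Y tY),
        ∀ x : Ω, (T : Y →ₗ[𝕜] 𝕜) (δ x) = (f : Ω → 𝕜) x) →
      ∀ T : ↥F → ↥(dualSub 𝕜 Y tY),
        (∀ (f : ↥F) (x : Ω), ((T f : Y →ₗ[𝕜] 𝕜) (δ x)) = (f : Ω → 𝕜) x) →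
        Function.Injective T ∧ (∀ f g : ↥F, T (f + g) = T f + T g) ∧
          ∀ (c : 𝕜) (f : ↥F), T (c • f) = c • T f) ∧
    -- (b)
    (((∀ y' : ↥(dualSub 𝕜 Y tY), (fun x : Ω => (y' : Y →ₗ[𝕜] 𝕜) (δ x)) ∈ F) ∧
        (∀ f : ↥F, ∃! T : ↥(dualSub 𝕜 Y tY),
          ∀ x : Ω, (T : Y →ₗ[𝕜] 𝕜) (δ x) = (f : Ω → 𝕜) x)) →
      ∀ T : ↥F → ↥(dualSub 𝕜 Y tY),
        (∀ (f : ↥F) (x : Ω), ((T f : Y →ₗ[𝕜] 𝕜) (δ x)) = (f : Ω → 𝕜) x) →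
        Function.Bijective T ∧
          (∀ y' : ↥(dualSub 𝕜 Y tY), ∃ f : ↥F, T f = y' ∧
            ((f : Ω → 𝕜) = fun x : Ω => (y' : Y →ₗ[𝕜] 𝕜) (δ x))) ∧
          @Dense Y tY ↑(Submodule.span 𝕜 (Set.range δ))) := by
  classical
  letI := tY
  haveI : IsTopologicalAddGroup Y := hY.tag
  haveI : ContinuousSMul 𝕜 Y := hY.csmul
  haveI : T2Space Y := hY.t2
  haveI : LocallyConvexSpace ℝ Y := hY.lcs
  haveI : ContinuousSMul ℝ Y := by
    refine ⟨?_⟩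
    have h1 : Continuous fun p : ℝ × Y => (algebraMap ℝ 𝕜 p.1) • p.2 :=
      ((continuous_algebraMap ℝ 𝕜).comp continuous_fst).smul continuous_snd
    have h2 : (fun p : ℝ × Y => (algebraMap ℝ 𝕜 p.1) • p.2) = fun p : ℝ × Y => p.1 • p.2 := by
      funext p; exact algebraMap_smul 𝕜 p.1 p.2
    rw [h2] at h1; exact h1
  -- The common "part (a)" argument
  have key : (∀ f : ↥F, ∃! T : ↥(dualSub 𝕜 Y tY),
        ∀ x : Ω, (T : Y →ₗ[𝕜] 𝕜) (δ x) = (f : Ω → 𝕜) x) →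
      ∀ T : ↥F → ↥(dualSub 𝕜 Y tY),
        (∀ (f : ↥F) (x : Ω), ((T f : Y →ₗ[𝕜] 𝕜) (δ x)) = (f : Ω → 𝕜) x) →
        Function.Injective T ∧ (∀ f g : ↥F, T (f + g) = T f + T g) ∧
          ∀ (c : 𝕜) (f : ↥F), T (c • f) = c • T f := by
    intro hii T hT
    have uniq : ∀ (f : ↥F) (S : ↥(dualSub 𝕜 Y tY)),
        (∀ x : Ω, (S : Y →ₗ[𝕜] 𝕜) (δ x) = (f : Ω → 𝕜) x) → T f = S := by
      intro f S hS
      exact (hii f).unique (hT f) hS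
    refine ⟨?_, ?_, ?_⟩
    · intro f g hfg
      apply Subtype.ext
      funext x
      have h1 := hT f x
      have h2 := hT g x
      rw [hfg] at h1
      rw [← h1, h2]
    · intro f g
      refine uniq (f + g) (T f + T g) fun x => ?_
      simp [hT]
    · intro c f
      refine uniq (c • f) (c • T f) fun x => ?_
      simp [hT]
  constructor
  · exact key
  · rintro ⟨hi, hii⟩ T hT
    obtain ⟨hinj, -, -⟩ := key hii T hT
    have uniq : ∀ (f : ↥F) (S : ↥(dualSub 𝕜 Y tY)),
        (∀ x : Ω, (S : Y →ₗ[𝕜] 𝕜) (δ x) = (f : Ω → 𝕜) x) → T f = S := by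
      intro f S hS
      exact (hii f).unique (hT f) hS
    have hsurj : ∀ y' : ↥(dualSub 𝕜 Y tY), ∃ f : ↥F, T f = y' ∧
        ((f : Ω → 𝕜) = fun x : Ω => (y' : Y →ₗ[𝕜] 𝕜) (δ x)) := by
      intro y'
      refine ⟨⟨fun x => (y' : Y →ₗ[𝕜] 𝕜) (δ x), hi y'⟩, ?_, rfl⟩
      exact uniq _ y' fun x => rfl
    refine ⟨⟨hinj, fun y' => (hsurj y').imp fun f hf => hf.1⟩, hsurj, ?_⟩
    -- density of the span
    intro y0
    by_contra hy0
    set p : Submodule 𝕜 Y := Submodule.span 𝕜 (Set.range δ) with hp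
    have hconv : Convex ℝ (closure (p : Set Y)) :=
      ((p.restrictScalars ℝ).convex).closure
    obtain ⟨g, u, hgs, hgy⟩ :=
      geometric_hahn_banach_closed_point hconv isClosed_closure hy0
    have hu0 : (0 : ℝ) < u := by
      have := hgs 0 (subset_closure p.zero_mem)
      simpa using this
    have hg0 : ∀ v ∈ p, g v = 0 := by
      intro v hv
      by_contra hgv
      have hmem : ((u + 1) / g v) • v ∈ p :=
        (p.restrictScalars ℝ).smul_mem _ hv
      have := hgs _ (subset_closure hmem)
      rw [g.map_smul, smul_eq_mul, div_mul_cancel₀ _ hgv] at this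
      linarith
    -- extend g to a 𝕜-linear functional
    set φ : Y →ₗ[𝕜] 𝕜 := LinearMap.extendTo𝕜' (g.toLinearMap : Y →ₗ[ℝ] ℝ) with hφ
    have hφc : Continuous fun x : Y => φ x := by
      have : (fun x : Y => φ x) =
          fun x : Y => ((g x : 𝕜) - (RCLike.I : 𝕜) * (g ((RCLike.I : 𝕜) • x) : 𝕜)) := by
        funext x; exact LinearMap.extendTo𝕜'_apply _ x
      rw [this]
      exact (RCLike.continuous_ofReal.comp g.continuous).sub
        (continuous_const.mul (RCLike.continuous_ofReal.comp
          (g.continuous.comp (continuous_const_smul _))))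
    have hφmem : φ ∈ dualSub 𝕜 Y tY := hφc
    have hφ0 : ∀ v ∈ p, φ v = 0 := by
      intro v hv
      have h1 : g v = 0 := hg0 v hv
      have h2 : g ((RCLike.I : 𝕜) • v) = 0 := hg0 _ (p.smul_mem _ hv)
      rw [show φ v = _ from LinearMap.extendTo𝕜'_apply _ v]
      simp [ContinuousLinearMap.coe_coe, h1, h2]
    have hzero : (⟨φ, hφmem⟩ : ↥(dualSub 𝕜 Y tY)) = (0 : ↥(dualSub 𝕜 Y tY)) := by
      refine (hii 0).unique ?_ ?_
      · intro x
        have : δ x ∈ p := Submodule.subset_span ⟨x, rfl⟩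
        simp [hφ0 _ this]
      · intro x
        simp
    have hφy0 : φ y0 = 0 := by
      have := congrArg (fun S : ↥(dualSub 𝕜 Y tY) => (S : Y →ₗ[𝕜] 𝕜) y0) hzero
      simpa using this
    have hre : RCLike.re (φ y0) = g y0 := LinearMap.extendTo𝕜'_apply_re _ y0
    rw [hφy0] at hre
    simp at hre
    linarith
end

section
/- Let F be a linear space of 𝕂-valued functions on a non-empty set Ω, Y a locally convex Hausdorff space over 𝕂, δ : Ω → Y a map, and T : F → Y' a linear injective map such that T(f) ∘ δ = f for all f ∈ F. Then T is surjective if and only if both of the following hold: for every y' ∈ Y' one has y' ∘ δ ∈ F, and the linear span of {δ(x) | x ∈ Ω} is dense in Y. -/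
open Topology Filter Set

universe u v w

/-- For a linear injective `T : F → Y'` with `T(f) ∘ δ = f`, `T` is
surjective iff `y' ∘ δ ∈ F` for all `y' ∈ Y'` and the span of the range of `δ` is dense. -/
theorem statement3 {𝕜 : Type u} [RCLike 𝕜] {Ω : Type w} [Nonempty Ω]
    (F : Submodule 𝕜 (Ω → 𝕜))
    {Y : Type v} [AddCommGroup Y] [Module 𝕜 Y] [Module ℝ Y] [IsScalarTower ℝ 𝕜 Y]
    (tY : TopologicalSpace Y) (hY : IsLCH 𝕜 Y tY) (δ : Ω → Y)
    (T : ↥F →ₗ[𝕜] ↥(dualSub 𝕜 Y tY)) (hinj : Function.Injective T)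
    (hT : ∀ (f : ↥F) (x : Ω), ((T f : Y →ₗ[𝕜] 𝕜) (δ x)) = (f : Ω → 𝕜) x) :
    Function.Surjective T ↔
      ((∀ y' : ↥(dualSub 𝕜 Y tY), (fun x : Ω => (y' : Y →ₗ[𝕜] 𝕜) (δ x)) ∈ F) ∧
        @Dense Y tY ↑(Submodule.span 𝕜 (Set.range δ))) := by
  letI := tY
  haveI := hY.tag
  haveI := hY.csmul
  haveI := hY.t2
  haveI := hY.lcs
  constructor
  · intro hsurj
    constructor
    · intro y'
      obtain ⟨f, rfl⟩ := hsurj y'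
      have : (fun x : Ω => ((T f : Y →ₗ[𝕜] 𝕜)) (δ x)) = (f : Ω → 𝕜) := by
        funext x; exact hT f x
      rw [this]; exact f.2
    · -- density of the span
      by_contra hnd
      -- find a point outside the closure of the span
      have hne : ∃ y : Y, y ∉ (Submodule.span 𝕜 (Set.range δ)).topologicalClosure := by
        by_contra h
        push_neg at h
        apply hnd
        have : (Submodule.span 𝕜 (Set.range δ)).topologicalClosure = ⊤ := by
          ext y; simp [h y]
        have hcl : closure ((Submodule.span 𝕜 (Set.range δ)) : Set Y) = Set.univ := by
          have := congrArg (fun p : Submodule 𝕜 Y => (p : Set Y)) this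
          simpa [Submodule.topologicalClosure_coe] using this
        rw [Dense]
        intro y; rw [hcl]; trivial
      obtain ⟨y, hy⟩ := hne
      set M := (Submodule.span 𝕜 (Set.range δ)).topologicalClosure with hM
      have hconv : Convex ℝ (M : Set Y) := (M.restrictScalars ℝ).convex
      obtain ⟨φ, u, hφy, hφ⟩ := RCLike.geometric_hahn_banach_point_closed (𝕜 := 𝕜)
        hconv (Submodule.isClosed_topologicalClosure _) hy
      -- φ vanishes on M
      have hu0 : u < 0 := by simpa using hφ 0 M.zero_mem
      have hvanish : ∀ b ∈ M, φ b = 0 := by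
        intro b hb
        by_contra hb0
        -- scale b to violate the bound
        set c : 𝕜 := ((u - 1 : ℝ) : 𝕜) * (φ b)⁻¹ with hc
        have hmem : c • b ∈ M := M.smul_mem c hb
        have : φ (c • b) = ((u - 1 : ℝ) : 𝕜) := by
          rw [map_smul, smul_eq_mul, hc, mul_assoc, inv_mul_cancel₀ hb0, mul_one]
        have h2 := hφ _ hmem
        rw [this] at h2
        simp only [RCLike.ofReal_re] at h2
        linarith
      -- φ as an element of the dual
      have hφmem : (φ : Y →ₗ[𝕜] 𝕜) ∈ dualSub 𝕜 Y tY := φ.cont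
      obtain ⟨f, hf⟩ := hsurj ⟨(φ : Y →ₗ[𝕜] 𝕜), hφmem⟩
      have hf0 : f = 0 := by
        ext x
        have := hT f x
        rw [hf] at this
        have hδ : δ x ∈ M :=
          (Submodule.le_topologicalClosure _) (Submodule.subset_span ⟨x, rfl⟩)
        have := this.symm.trans (hvanish (δ x) hδ)
        simpa using this
      rw [hf0, map_zero] at hf
      have : φ y = 0 := by
        have := congrArg (fun g : ↥(dualSub 𝕜 Y tY) => (g : Y →ₗ[𝕜] 𝕜) y) hf
        simpa using this.symm
      rw [this] at hφy
      simp at hφy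
      linarith
  · rintro ⟨hmem, hdense⟩ y'
    refine ⟨⟨fun x => (y' : Y →ₗ[𝕜] 𝕜) (δ x), hmem y'⟩, ?_⟩
    -- T f and y' agree on range δ, hence on its span, hence everywhere by density
    set f : ↥F := ⟨fun x => (y' : Y →ₗ[𝕜] 𝕜) (δ x), hmem y'⟩ with hfdef
    have hagree : ∀ x : Ω, (T f : Y →ₗ[𝕜] 𝕜) (δ x) = (y' : Y →ₗ[𝕜] 𝕜) (δ x) := fun x => hT f x
    have hspan : ∀ z ∈ Submodule.span 𝕜 (Set.range δ),
        (T f : Y →ₗ[𝕜] 𝕜) z = (y' : Y →ₗ[𝕜] 𝕜) z := by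
      intro z hz
      induction hz using Submodule.span_induction with
      | mem z hz => obtain ⟨x, rfl⟩ := hz; exact hagree x
      | zero => simp
      | add a b _ _ ha hb => simp [ha, hb]
      | smul c a _ ha => simp [ha]
    have heq : ((T f : Y →ₗ[𝕜] 𝕜) : Y → 𝕜) = ((y' : Y →ₗ[𝕜] 𝕜) : Y → 𝕜) :=
      Continuous.ext_on hdense (T f).2 y'.2 hspan
    ext z
    exact congrFun heq z
end

section
/- Let (X, τ) be a normable locally convex Hausdorff space. Then the following are equivalent: (a) (X, τ) satisfies (BBC) and (CNC) for some locally convex Hausdorff topology τ̃ on X; (b) (X, τ) is quasi-complete and satisfies (BBC) for some locally convex Hausdorff topology τ̃ on X; (c) there exist a norm |||·||| on X which induces the topology τ and a locally convex Hausdorff topology τ̃ on X such that the closed unit ball B_{|||·|||} = {x ∈ X : |||x||| ≤ 1} is τ̃-compact. -/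
open Topology Filter Set

universe u v w

open Pointwise

section Helpers

variable {𝕜 : Type u} [RCLike 𝕜]
variable {X : Type v} [AddCommGroup X] [Module 𝕜 X] [Module ℝ X] [IsScalarTower ℝ 𝕜 X]

lemma rsmul (r : ℝ) (x : X) : r • x = (r : 𝕜) • x :=
  RCLike.real_smul_eq_coe_smul r x

lemma sn_rsmul (N : Seminorm 𝕜 X) (r : ℝ) (x : X) : N (r • x) = |r| * N x := by
  rw [rsmul (𝕜 := 𝕜), map_smul_eq_mul, RCLike.norm_ofReal]

lemma bal_rsmul_mem {B : Set X} (hB : Balanced 𝕜 B) {r : ℝ} (hr : |r| ≤ 1)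
    {y : X} (hy : y ∈ B) : r • y ∈ B := by
  rw [rsmul (𝕜 := 𝕜)]
  exact hB ((r : 𝕜)) (by rwa [RCLike.norm_ofReal]) ⟨y, hy, rfl⟩

lemma bal_smul_subset {B : Set X} (hB : Balanced 𝕜 B) {r R : ℝ} (hR : 0 < R)
    (hr : |r| ≤ R) : r • B ⊆ R • B := by
  rintro x ⟨y, hy, rfl⟩
  refine ⟨(r / R) • y, bal_rsmul_mem hB ?_ hy, ?_⟩
  · rw [abs_div, abs_of_pos hR, div_le_one hR]; exact hr
  · show R • (r / R) • y = r • y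
    rw [smul_smul, mul_div_cancel₀ _ hR.ne']

lemma smul_cball (N : Seminorm 𝕜 X) {r : ℝ} (hr : 0 < r) :
    r • {x : X | N x ≤ 1} = {x : X | N x ≤ r} := by
  ext x
  rw [mem_smul_set_iff_inv_smul_mem₀ hr.ne']
  simp only [Set.mem_setOf_eq, sn_rsmul, abs_inv, abs_of_pos hr]
  rw [inv_mul_le_iff₀ hr, mul_one]

variable {t : TopologicalSpace X} {N : Seminorm 𝕜 X}

lemma vnb_of_subset (hN : InducedByNorm 𝕜 X t N) {s : Set X} {r : ℝ} (hr : 0 < r)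
    (hs : s ⊆ {x | N x ≤ r}) : VNB 𝕜 X t s := by
  intro V hV
  obtain ⟨ε, hε, hεV⟩ := hN.2.mem_iff.1 hV
  refine absorbs_iff_norm.2 ⟨(r + 1) / ε, fun c hc x hx => ?_⟩
  have hrc : (r + 1) / ε ≤ ‖c‖ := hc
  have hcpos : 0 < ‖c‖ := lt_of_lt_of_le (by positivity) hrc
  have hc0 : c ≠ 0 := norm_pos_iff.1 hcpos
  refine ⟨c⁻¹ • x, hεV ?_, show c • c⁻¹ • x = x by rw [smul_inv_smul₀ hc0]⟩
  have hNx : N x ≤ r := hs hx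
  have : N (c⁻¹ • x) = ‖c‖⁻¹ * N x := by rw [map_smul_eq_mul, norm_inv]
  rw [Set.mem_setOf_eq, this, inv_mul_lt_iff₀ hcpos]
  have h2 : r + 1 ≤ ‖c‖ * ε := by
    rw [div_le_iff₀ hε] at hrc; linarith
  linarith

lemma vnb_subset_ball (hN : InducedByNorm 𝕜 X t N) {s : Set X} (hs : VNB 𝕜 X t s) :
    ∃ r : ℝ, 0 < r ∧ s ⊆ {x | N x ≤ r} := by
  have h1 : {x : X | N x < 1} ∈ @nhds X t 0 := hN.2.mem_of_mem one_pos
  obtain ⟨r, hr⟩ := absorbs_iff_norm.1 (hs h1)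
  set R : ℝ := max r 1 with hR
  have hR1 : (1:ℝ) ≤ R := le_max_right _ _
  have hcn : ‖((R : ℝ) : 𝕜)‖ = R := by rw [RCLike.norm_ofReal, abs_of_pos (by linarith)]
  refine ⟨R, by linarith, fun x hx => ?_⟩
  obtain ⟨y, hy, rfl⟩ := hr ((R : ℝ) : 𝕜) (by rw [hcn]; exact le_max_left _ _) hx
  have : N (((R:ℝ):𝕜) • y) = R * N y := by rw [map_smul_eq_mul, hcn]
  rw [Set.mem_setOf_eq, this]
  calc R * N y ≤ R * 1 := by
        exact mul_le_mul_of_nonneg_left (le_of_lt hy) (by linarith)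
    _ = R := mul_one R

lemma absorbent_of_ball_subset {B : Set X} (hB : {x : X | N x ≤ 1} ⊆ B) :
    Absorbent ℝ B := by
  intro x
  refine absorbs_iff_norm.2 ⟨N x + 1, fun c hc z hz => ?_⟩
  have hc1 : N x + 1 ≤ |c| := by rwa [Real.norm_eq_abs] at hc
  have hcpos : 0 < |c| := lt_of_lt_of_le (by positivity) hc1
  have hc0 : c ≠ 0 := fun h => by simp [h] at hcpos
  rw [Set.eq_of_mem_singleton hz]
  refine ⟨c⁻¹ • x, hB ?_, show c • c⁻¹ • x = x by rw [smul_inv_smul₀ hc0]⟩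
  rw [Set.mem_setOf_eq, sn_rsmul, abs_inv, inv_mul_le_iff₀ hcpos, mul_one]
  linarith [apply_nonneg N x]

end Helpers

section MainLemmas

variable {𝕜 : Type u} [RCLike 𝕜]
variable {X : Type v} [AddCommGroup X] [Module 𝕜 X] [Module ℝ X] [IsScalarTower ℝ 𝕜 X]
variable {t tt : TopologicalSpace X} {N : Seminorm 𝕜 X}

lemma cball_convex (r : ℝ) : Convex ℝ {x : X | N x ≤ r} := by
  have := N.convex_closedBall (0 : X) r
  rwa [Seminorm.closedBall_zero_eq] at this

lemma cball_balanced (r : ℝ) : Balanced 𝕜 {x : X | N x ≤ r} := by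
  have := N.balanced_closedBall_zero (r := r)
  rwa [Seminorm.closedBall_zero_eq] at this

/-- scaled closed balls are tt-compact if the unit ball is. -/
lemma cball_compact (htt : IsLCH 𝕜 X tt) (hK : @IsCompact X tt {x : X | N x ≤ 1})
    {r : ℝ} (hr : 0 < r) : @IsCompact X tt {x : X | N x ≤ r} := by
  letI := tt
  haveI := htt.csmul
  have : {x : X | N x ≤ r} = (fun x : X => ((r : ℝ) : 𝕜) • x) '' {x : X | N x ≤ 1} := by
    rw [← smul_cball N hr]
    ext x
    constructor
    · rintro ⟨y, hy, rfl⟩; exact ⟨y, hy, (rsmul r y).symm⟩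
    · rintro ⟨y, hy, rfl⟩; exact ⟨y, hy, (rsmul r y)⟩
  rw [this]
  exact hK.image (continuous_const_smul _)

lemma lemC_to_a (htt : IsLCH 𝕜 X tt) (hN : InducedByNorm 𝕜 X t N)
    (hK : @IsCompact X tt {x : X | N x ≤ 1}) :
    BBC 𝕜 X t tt ∧ CNC 𝕜 X t tt := by
  letI := tt
  haveI httt2 := htt.t2
  constructor
  · intro s hs
    obtain ⟨r, hr, hsub⟩ := vnb_subset_ball hN hs
    refine ⟨{x | N x ≤ r}, hsub, ⟨cball_balanced r, cball_convex r⟩,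
      vnb_of_subset hN hr subset_rfl, cball_compact htt hK hr⟩
  · intro U hU
    obtain ⟨ε, hε, hεU⟩ := hN.2.mem_iff.1 hU
    refine ⟨{x | N x ≤ ε / 2}, ?_, ?_, ⟨cball_balanced _, cball_convex _⟩, ?_⟩
    · exact mem_of_superset (hN.2.mem_of_mem (by linarith : (0:ℝ) < ε / 2))
        (fun x (hx : N x < ε / 2) => show N x ≤ ε / 2 from le_of_lt hx)
    · intro x hx
      have h1 : N x ≤ ε / 2 := hx
      exact hεU (show N x < ε by linarith)
    · exact (cball_compact htt hK (by linarith)).isClosed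

lemma lemA_to_c (htt : IsLCH 𝕜 X tt) (hN : InducedByNorm 𝕜 X t N) (hb : BBC 𝕜 X t tt) :
    ∃ N' : Seminorm 𝕜 X, InducedByNorm 𝕜 X t N' ∧ @IsCompact X tt {x : X | N' x ≤ 1} := by
  obtain ⟨B, hsub, ⟨hbal, hconv⟩, hvnb, hcomp⟩ :=
    hb {x | N x ≤ 1} (vnb_of_subset hN one_pos subset_rfl)
  have habs : Absorbent ℝ B := absorbent_of_ball_subset hsub
  obtain ⟨r, hr, hBr⟩ := vnb_subset_ball hN hvnb
  set N' : Seminorm 𝕜 X := gaugeSeminorm hbal hconv habs with hN'def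
  have hN'g : ∀ x : X, N' x = gauge B x := fun x => rfl
  -- N x ≤ r * N' x
  have key1 : ∀ x : X, N x ≤ r * N' x := by
    intro x
    have h : ∀ ε > 0, N x / r ≤ N' x + ε := by
      intro ε hε
      have hg : gauge B x < N' x + ε := by rw [← hN'g]; linarith [hε]
      obtain ⟨b, hb0, hbe, y, hy, rfl⟩ := exists_lt_of_gauge_lt habs hg
      have : N (b • y) = b * N y := by rw [sn_rsmul, abs_of_pos hb0]
      rw [this, div_le_iff₀ hr]
      calc b * N y ≤ b * r := mul_le_mul_of_nonneg_left (hBr hy) hb0.le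
        _ ≤ (N' (b • y) + ε) * r := by
            apply mul_le_mul_of_nonneg_right _ hr.le
            exact le_of_lt (by rw [hN'g]; exact hbe)
    have := le_of_forall_pos_le_add (fun ε hε => h ε hε)
    rw [div_le_iff₀ hr] at this
    linarith [this]
  -- N' ≤ N
  have key2 : ∀ x : X, N' x ≤ N x := by
    intro x
    refine le_of_forall_pos_le_add (fun ε hε => ?_)
    have hx : x ∈ (N x + ε) • B := by
      have hpos : 0 < N x + ε := by positivity
      rw [mem_smul_set_iff_inv_smul_mem₀ hpos.ne']
      apply hsub
      rw [Set.mem_setOf_eq, sn_rsmul, abs_inv, abs_of_pos hpos,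
        inv_mul_le_iff₀ hpos, mul_one]
      linarith
    have := gauge_le_of_mem (by positivity : (0:ℝ) ≤ N x + ε) hx
    rw [hN'g]; exact this
  refine ⟨N', ⟨?_, ?_⟩, ?_⟩
  · intro x hx
    have := key1 x
    rw [hx, mul_zero] at this
    exact hN.1 x (le_antisymm this (apply_nonneg N x))
  · refine hN.2.to_hasBasis ?_ ?_
    · intro ε hε
      refine ⟨ε / r, by positivity, fun x hx => ?_⟩
      rw [Set.mem_setOf_eq]
      calc N x ≤ r * N' x := key1 x
        _ < r * (ε / r) := by
            exact mul_lt_mul_of_pos_left hx hr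
        _ = ε := by field_simp
    · intro ε hε
      exact ⟨ε, hε, fun x hx => lt_of_le_of_lt (key2 x) hx⟩
  · -- compactness of the unit ball of N'
    letI := tt
    haveI := htt.t2
    haveI := htt.csmul
    have hscomp : ∀ n : ℕ, IsCompact ((1 + 1 / ((n:ℝ) + 1)) • B) := by
      intro n
      have : (1 + 1 / ((n:ℝ) + 1)) • B
          = (fun x : X => (((1 + 1 / ((n:ℝ) + 1) : ℝ)) : 𝕜) • x) '' B := by
        ext x
        constructor
        · rintro ⟨y, hy, rfl⟩; exact ⟨y, hy, (rsmul _ y).symm⟩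
        · rintro ⟨y, hy, rfl⟩; exact ⟨y, hy, rsmul _ y⟩
      rw [this]
      exact hcomp.image (continuous_const_smul _)
    have heq : {x : X | N' x ≤ 1} = ⋂ n : ℕ, (1 + 1 / ((n:ℝ) + 1)) • B := by
      ext x
      simp only [Set.mem_setOf_eq, Set.mem_iInter]
      constructor
      · intro hx n
        have hpos : (0:ℝ) < 1 / ((n:ℝ) + 1) := by positivity
        have hg : gauge B x < 1 + 1 / ((n:ℝ) + 1) := by
          rw [← hN'g]; linarith
        obtain ⟨b, hb0, hbe, y, hy, rfl⟩ := exists_lt_of_gauge_lt habs hg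
        exact bal_smul_subset hbal (by linarith)
          (by rw [abs_of_pos hb0]; exact hbe.le) ⟨y, hy, rfl⟩
      · intro hx
        refine le_of_forall_pos_le_add (fun ε hε => ?_)
        obtain ⟨n, hn⟩ := exists_nat_one_div_lt hε
        have := gauge_le_of_mem (by positivity : (0:ℝ) ≤ 1 + 1/((n:ℝ)+1)) (hx n)
        rw [hN'g]
        linarith
    rw [heq]
    refine (hscomp 0).of_isClosed_subset
      (isClosed_iInter (fun n => (hscomp n).isClosed)) (Set.iInter_subset _ 0)

end MainLemmas

section Complete

variable {𝕜 : Type u} [RCLike 𝕜]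
variable {X : Type v} [AddCommGroup X] [Module 𝕜 X] [Module ℝ X] [IsScalarTower ℝ 𝕜 X]
variable {t tt : TopologicalSpace X} {N : Seminorm 𝕜 X}

lemma closed_trans_ball (htt : IsLCH 𝕜 X tt) (hK : @IsCompact X tt {x : X | N x ≤ 1})
    {ε : ℝ} (hε : 0 < ε) (a : X) : @IsClosed X tt {y : X | N (y - a) ≤ ε} := by
  letI := tt
  haveI := htt.tag
  haveI := htt.t2
  have h1 : IsClosed {x : X | N x ≤ ε} := (cball_compact htt hK hε).isClosed
  exact h1.preimage (continuous_id.sub continuous_const)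

lemma lemC_qcomplete (ht : IsLCH 𝕜 X t) (htt : IsLCH 𝕜 X tt) (hN : InducedByNorm 𝕜 X t N)
    (hK : @IsCompact X tt {x : X | N x ≤ 1}) : QuasiCompleteTop 𝕜 X t := by
  refine ⟨ht.tag, ?_⟩
  letI : TopologicalSpace X := t
  haveI : IsTopologicalAddGroup X := ht.tag
  letI : UniformSpace X := IsTopologicalAddGroup.rightUniformSpace X
  intro s hscl hsb
  obtain ⟨r, hr, hsub⟩ := vnb_subset_ball hN hsb
  have hKr : @IsCompact X tt {x : X | N x ≤ r} := cball_compact htt hK hr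
  intro f hf hfs
  haveI hnb : f.NeBot := hf.1
  obtain ⟨x, hxK, hx⟩ := hKr (le_trans hfs (principal_mono.2 hsub))
  -- hx : @ClusterPt X tt x f
  have hxcl : ∀ D : Set X, D ∈ f → x ∈ @closure X tt D := fun D hD =>
    (@mem_closure_iff_clusterPt X tt x D).2
      (@ClusterPt.mono X tt x f (𝓟 D) hx (le_principal_iff.2 hD))
  have huni : f ×ˢ f ≤ comap (fun p : X × X => p.2 - p.1) (𝓝 0) := by
    have h : f ×ˢ f ≤ comap (fun p : X × X => p.2 + -p.1) (𝓝 0) := hf.2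
    simpa only [sub_eq_add_neg] using h
  have hft : f ≤ 𝓝 x := by
    intro U hU
    rw [← map_add_left_nhds_zero x, mem_map] at hU
    obtain ⟨ε, hε, hεU⟩ := hN.2.mem_iff.1 hU
    have hW : (fun p : X × X => p.2 - p.1) ⁻¹' {z : X | N z < ε / 3} ∈ f ×ˢ f := by
      exact huni (preimage_mem_comap (hN.2.mem_of_mem (by linarith)))
    obtain ⟨A, hA, B, hB, hAB⟩ := mem_prod_iff.1 hW
    set C := A ∩ B with hC
    have hCf : C ∈ f := inter_mem hA hB
    have key : ∀ y ∈ C, N (y - x) < ε := by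
      intro y hy
      have hsubD : C ⊆ {z : X | N (z - y) ≤ ε / 3} := by
        intro b hb
        have : (y, b) ∈ A ×ˢ B := ⟨hy.1, hb.2⟩
        have h2 : N (b - y) < ε / 3 := hAB this
        exact le_of_lt h2
      have hxD : x ∈ {z : X | N (z - y) ≤ ε / 3} :=
        Set.mem_of_mem_of_subset (hxcl C hCf)
          (@closure_minimal X tt _ _ hsubD (closed_trans_ball htt hK (by linarith) y))
      have h3 : N (x - y) ≤ ε / 3 := hxD
      have h4 : N (y - x) = N (x - y) := by
        rw [← neg_sub, map_neg_eq_map]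
      rw [h4]; linarith
    apply mem_of_superset hCf
    intro y hy
    have := hεU (key y hy)
    simpa using this
  refine ⟨x, ?_, hft⟩
  have : x ∈ closure s := mem_closure_iff_clusterPt.2
    (Filter.NeBot.mono hnb (le_inf hft hfs))
  rwa [hscl.closure_eq] at this

end Complete

/-- For a normable locally convex Hausdorff space `(X, τ)` the following
are equivalent: (a) `(X, τ)` satisfies (BBC) and (CNC) for some `τ̃`; (b) `(X, τ)` is
quasi-complete and satisfies (BBC) for some `τ̃`; (c) there are a norm inducing `τ` and a
locally convex Hausdorff topology `τ̃` for which the closed unit ball is `τ̃`-compact. -/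
theorem statement4 {𝕜 : Type u} [RCLike 𝕜]
    {X : Type v} [AddCommGroup X] [Module 𝕜 X] [Module ℝ X] [IsScalarTower ℝ 𝕜 X]
    (t : TopologicalSpace X) (ht : IsLCH 𝕜 X t)
    (hnorm : ∃ N : Seminorm 𝕜 X, InducedByNorm 𝕜 X t N) :
    ((∃ tt : TopologicalSpace X, IsLCH 𝕜 X tt ∧ BBC 𝕜 X t tt ∧ CNC 𝕜 X t tt) ↔
      (QuasiCompleteTop 𝕜 X t ∧
        ∃ tt : TopologicalSpace X, IsLCH 𝕜 X tt ∧ BBC 𝕜 X t tt)) ∧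
    ((∃ tt : TopologicalSpace X, IsLCH 𝕜 X tt ∧ BBC 𝕜 X t tt ∧ CNC 𝕜 X t tt) ↔
      (∃ (N : Seminorm 𝕜 X) (tt : TopologicalSpace X), InducedByNorm 𝕜 X t N ∧
        IsLCH 𝕜 X tt ∧ @IsCompact X tt {x : X | N x ≤ 1})) := by
  obtain ⟨N, hN⟩ := hnorm
  have hca : ∀ (N' : Seminorm 𝕜 X) (tt : TopologicalSpace X), InducedByNorm 𝕜 X t N' →
      IsLCH 𝕜 X tt → @IsCompact X tt {x : X | N' x ≤ 1} →
      IsLCH 𝕜 X tt ∧ BBC 𝕜 X t tt ∧ CNC 𝕜 X t tt := fun N' tt hN' htt hK =>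
    ⟨htt, (lemC_to_a htt hN' hK).1, (lemC_to_a htt hN' hK).2⟩
  have hac : (∃ tt : TopologicalSpace X, IsLCH 𝕜 X tt ∧ BBC 𝕜 X t tt ∧ CNC 𝕜 X t tt) ↔
      (∃ (N' : Seminorm 𝕜 X) (tt : TopologicalSpace X), InducedByNorm 𝕜 X t N' ∧
        IsLCH 𝕜 X tt ∧ @IsCompact X tt {x : X | N' x ≤ 1}) := by
    constructor
    · rintro ⟨tt, htt, hb, -⟩
      obtain ⟨N', hN', hK⟩ := lemA_to_c htt hN hb
      exact ⟨N', tt, hN', htt, hK⟩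
    · rintro ⟨N', tt, hN', htt, hK⟩
      exact ⟨tt, hca N' tt hN' htt hK⟩
  refine ⟨?_, hac⟩
  constructor
  · rintro ⟨tt, htt, hb, hc⟩
    obtain ⟨N', hN', hK⟩ := lemA_to_c htt hN hb
    exact ⟨lemC_qcomplete ht htt hN' hK, tt, htt, hb⟩
  · rintro ⟨-, tt, htt, hb⟩
    obtain ⟨N', hN', hK⟩ := lemA_to_c htt hN hb
    exact ⟨tt, hca N' tt hN' htt hK⟩
end

section
/- Let (X, τ) be a locally convex Hausdorff space, τ̃ a locally convex Hausdorff topology on X, and γ̃ = γ̃(τ, τ̃) the finest locally convex Hausdorff topology on X which coincides with τ̃ on every τ-bounded set; assume that a subset of X is τ-bounded if and only if it is γ̃-bounded (condition (BτBγ̃)). Then (X, γ̃) is a semi-Montel space if and only if (X, τ) satisfies (BBC) for τ̃. -/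
open Topology Filter Set

universe u v w

section AuxStatement8

open Pointwise
open scoped ComplexOrder

variable {𝕜 : Type u} [RCLike 𝕜]
variable {X : Type v} [AddCommGroup X] [Module 𝕜 X] [Module ℝ X] [IsScalarTower ℝ 𝕜 X]

theorem aux8_smulCommClass : SMulCommClass ℝ 𝕜 X :=
  ⟨fun r a x => by
    rw [← smul_one_smul 𝕜 r (a • x), ← smul_one_smul 𝕜 r x, smul_smul, smul_smul, mul_comm]⟩

theorem aux8_convex_iff {s : Set X} : Convex 𝕜 s ↔ Convex ℝ s := by
  constructor
  · intro h x hx y hy a b ha hb hab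
    have := h hx hy (a := (a : 𝕜)) (b := (b : 𝕜)) (RCLike.ofReal_nonneg.2 ha)
      (RCLike.ofReal_nonneg.2 hb) (by rw [← RCLike.ofReal_add, hab, RCLike.ofReal_one])
    simpa only [RCLike.real_smul_eq_coe_smul (K := 𝕜)] using this
  · intro h x hx y hy a b ha hb hab
    obtain ⟨a', ha', rfl⟩ := (RCLike.nonneg_iff_exists_ofReal (K := 𝕜)).1 ha
    obtain ⟨b', hb', rfl⟩ := (RCLike.nonneg_iff_exists_ofReal (K := 𝕜)).1 hb
    have hab' : a' + b' = 1 := by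
      have := hab
      rw [← RCLike.ofReal_add, ← RCLike.ofReal_one] at this
      exact RCLike.ofReal_injective this
    have := h hx hy ha' hb' hab'
    simpa only [RCLike.real_smul_eq_coe_smul (K := 𝕜)] using this

theorem aux8_isCompact_congr (t1 t2 : TopologicalSpace X) (s : Set X)
    (h : TopologicalSpace.induced ((↑) : s → X) t1 = TopologicalSpace.induced ((↑) : s → X) t2) :
    @IsCompact X t1 s ↔ @IsCompact X t2 s := by
  rw [@isCompact_iff_compactSpace X t1 s, @isCompact_iff_compactSpace X t2 s]
  exact iff_of_eq (congrArg (fun T : TopologicalSpace s => @CompactSpace s T) h)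

variable [TopologicalSpace X] [IsTopologicalAddGroup X] [ContinuousSMul 𝕜 X]

include 𝕜 in
theorem aux8_continuousSMul_real : ContinuousSMul ℝ X := by
  refine ⟨?_⟩
  have h : (fun p : ℝ × X => p.1 • p.2) = fun p : ℝ × X => (p.1 • (1 : 𝕜)) • p.2 :=
    funext fun p => (smul_one_smul 𝕜 p.1 p.2).symm
  rw [h]
  exact (continuous_fst.smul continuous_const).smul continuous_snd

theorem aux8_vnb_closure {s : Set X} (hs : Bornology.IsVonNBounded 𝕜 s) :
    Bornology.IsVonNBounded 𝕜 (closure s) := by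
  intro V hV
  obtain ⟨W, ⟨hWn, hWc, hWb⟩, hWV⟩ := (nhds_basis_closed_balanced 𝕜 X).mem_iff.mp hV
  refine Absorbs.mono_left ?_ hWV
  filter_upwards [hs hWn, Bornology.eventually_ne_cobounded (0 : 𝕜)] with a ha ha0
  calc closure s ⊆ closure (a • W) := closure_mono ha
    _ = a • W := (hWc.smul_of_ne_zero ha0).closure_eq

theorem aux8_vnb_absConvexHull [LocallyConvexSpace ℝ X] {s : Set X}
    (hs : Bornology.IsVonNBounded 𝕜 s) :
    Bornology.IsVonNBounded 𝕜 (absConvexHull 𝕜 s) := by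
  haveI : SMulCommClass ℝ 𝕜 X := aux8_smulCommClass
  haveI : LocallyConvexSpace 𝕜 X := ⟨fun x => by
    simpa only [aux8_convex_iff (𝕜 := 𝕜)] using LocallyConvexSpace.convex_basis (𝕜 := ℝ) x⟩
  intro V hV
  obtain ⟨W, ⟨hWn, hWa⟩, hWV⟩ := (nhds_hasBasis_absConvex 𝕜 X).mem_iff.mp hV
  refine Absorbs.mono_left ?_ hWV
  filter_upwards [hs hWn] with a ha
  refine absConvexHull_min ha ⟨hWa.1.smul a, ?_⟩
  rw [aux8_convex_iff, ← Set.image_smul]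
  exact (aux8_convex_iff.1 hWa.2).is_linear_image ⟨smul_add a, fun r x => (smul_comm r a x).symm⟩

end AuxStatement8

/-- Under condition (BτBγ̃), the space `(X, γ̃)` is semi-Montel iff
`(X, τ)` satisfies (BBC) for `τ̃`. -/
theorem statement8 {𝕜 : Type u} [RCLike 𝕜]
    {X : Type v} [AddCommGroup X] [Module 𝕜 X] [Module ℝ X] [IsScalarTower ℝ 𝕜 X]
    (t tt g : TopologicalSpace X) (ht : IsLCH 𝕜 X t) (htt : IsLCH 𝕜 X tt)
    (hg : IsGamma 𝕜 X t tt g)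
    (hBtB : ∀ s : Set X, VNB 𝕜 X t s ↔ VNB 𝕜 X g s) :
    SemiMontel 𝕜 X g ↔ BBC 𝕜 X t tt := by
  constructor
  · -- semi-Montel implies (BBC)
    intro hSM s hs
    letI := g
    haveI : IsTopologicalAddGroup X := hg.1.tag
    haveI : ContinuousSMul 𝕜 X := hg.1.csmul
    haveI : T2Space X := hg.1.t2
    haveI : LocallyConvexSpace ℝ X := hg.1.lcs
    haveI : ContinuousSMul ℝ X := aux8_continuousSMul_real (𝕜 := 𝕜)
    letI : PartialOrder 𝕜 := RCLike.toPartialOrder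
    have hsg : Bornology.IsVonNBounded 𝕜 s := (hBtB s).1 hs
    have hH : Bornology.IsVonNBounded 𝕜 (absConvexHull 𝕜 s) := aux8_vnb_absConvexHull hsg
    set B : Set X := closure (absConvexHull 𝕜 s) with hBdef
    have hBb : Bornology.IsVonNBounded 𝕜 B := aux8_vnb_closure hH
    have hBt : VNB 𝕜 X t B := (hBtB B).2 hBb
    have hBcg : @IsCompact X g B := hSM _ hH
    refine ⟨B, (subset_absConvexHull (𝕜 := 𝕜)).trans subset_closure,
      ⟨balanced_absConvexHull.closure, (aux8_convex_iff.1 convex_absConvexHull).closure⟩, hBt, ?_⟩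
    exact (aux8_isCompact_congr g tt B (hg.2.1 B hBt)).1 hBcg
  · -- (BBC) implies semi-Montel
    intro hBBC s hs
    have hst : VNB 𝕜 X t s := (hBtB s).2 hs
    obtain ⟨B, hsB, hBabs, hBt, hBc⟩ := hBBC s hst
    have hBcg : @IsCompact X g B :=
      (aux8_isCompact_congr g tt B (hg.2.1 B hBt)).2 hBc
    letI := g
    haveI : T2Space X := hg.1.t2
    have hBclosed : IsClosed B := hBcg.isClosed
    exact hBcg.of_isClosed_subset isClosed_closure (closure_minimal hsB hBclosed)
end

section
/- Let (X, τ) be a bornological locally convex Hausdorff space, B the family of τ-bounded sets, τ̃ a locally convex Hausdorff topology on X, γ̃ = γ̃(τ, τ̃) the finest locally convex Hausdorff topology on X which coincides with τ̃ on every τ-bounded set, and assume a subset of X is τ-bounded iff it is γ̃-bounded (condition (BτBγ̃)). Then: the dual (X, γ̃)' is a closed linear subspace of the complete space (X, τ)'_b; (X, γ̃)' = X'_{B,τ̃} as linear spaces; the strong topology β((X,γ̃)', (X,γ̃)) equals the topology β of X'_{B,τ̃}, which equals the restriction of β((X,τ)', (X,τ)) to (X, γ̃)'. In particular, (X, γ̃)'_b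 is complete. -/
open Topology Filter Set

universe u v w

section MyAux

variable {𝕜 : Type u} [RCLike 𝕜]
variable {X : Type v} [AddCommGroup X] [Module 𝕜 X] [Module ℝ X] [IsScalarTower ℝ 𝕜 X]

/-- Image of a bounded set under a continuous linear functional is bounded. -/
lemma myaux_image_vnb (t : TopologicalSpace X) (f : X →ₗ[𝕜] 𝕜)
    (hf : @Continuous X 𝕜 t _ f) {s : Set X} (hs : VNB 𝕜 X t s) :
    Bornology.IsVonNBounded 𝕜 (f '' s) := by
  letI := t
  exact hs.image (⟨f, hf⟩ : X →L[𝕜] 𝕜)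

/-- Universe trick: a bounded linear functional on a bornological space is continuous. -/
lemma myaux_cont_of_bounded (t : TopologicalSpace X)
    (hborn : Bornological.{u, v, w} 𝕜 X t) (ht : IsLCH 𝕜 X t) (f : X →ₗ[𝕜] 𝕜)
    (hb : ∀ s : Set X, VNB 𝕜 X t s → Bornology.IsVonNBounded 𝕜 (f '' s)) :
    @Continuous X 𝕜 t _ f := by
  have hinj : Function.Injective (fun z : 𝕜 => (RCLike.re z, RCLike.im z)) := by
    intro a b h
    simp only [Prod.mk.injEq] at h
    exact RCLike.ext h.1 h.2
  haveI hsmall : Small.{w} 𝕜 := small_of_injective hinj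
  set Y := Shrink.{w} 𝕜 with hY
  letI tY : TopologicalSpace Y :=
    TopologicalSpace.induced ((equivShrink 𝕜).symm) inferInstance
  haveI htower : IsScalarTower ℝ 𝕜 Y := by
    constructor
    intro r c y
    have hk : ∀ (a : 𝕜) (z : Shrink.{w} 𝕜),
        (equivShrink 𝕜).symm (a • z) = a • (equivShrink 𝕜).symm z := fun a z => by
      rw [show a • z = equivShrink 𝕜 (a • (equivShrink 𝕜).symm z) from rfl,
        Equiv.symm_apply_apply]
    have hr : ∀ (a : ℝ) (z : Shrink.{w} 𝕜),
        (equivShrink 𝕜).symm (a • z) = a • (equivShrink 𝕜).symm z := fun a z => by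
      rw [show a • z = equivShrink 𝕜 (a • (equivShrink 𝕜).symm z) from rfl,
        Equiv.symm_apply_apply]
    apply (equivShrink 𝕜).symm.injective
    rw [hk, hr, hk, smul_assoc]
  have hlch : IsLCH 𝕜 Y tY := by
    constructor
    · exact topologicalAddGroup_induced (Shrink.linearEquiv 𝕜 𝕜).toLinearMap
    · exact continuousSMul_induced (Shrink.linearEquiv 𝕜 𝕜).toLinearMap.toMulActionHom
    · exact .of_injective_continuous (equivShrink 𝕜).symm.injective continuous_induced_dom
    · exact LocallyConvexSpace.induced (Shrink.linearEquiv ℝ 𝕜).toLinearMap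
  -- the composed linear map into Y
  set F : X →ₗ[𝕜] Y := ((Shrink.linearEquiv 𝕜 𝕜).symm).toLinearMap.comp f with hF
  have hcontY : @Continuous 𝕜 Y _ tY ((Shrink.linearEquiv 𝕜 𝕜).symm) := by
    apply continuous_induced_rng.mpr
    have : ((equivShrink 𝕜).symm ∘ fun z : 𝕜 => ((Shrink.linearEquiv 𝕜 𝕜).symm) z) = id := by
      funext z
      show (equivShrink 𝕜).symm ((equivShrink 𝕜) z) = z
      simp
    rw [this]
    exact continuous_id
  have hbY : ∀ s : Set X, VNB 𝕜 X t s → VNB 𝕜 Y tY (F '' s) := by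
    intro s hs
    have h1 : Bornology.IsVonNBounded 𝕜 (f '' s) := hb s hs
    letI := tY
    have h2 := h1.image (⟨((Shrink.linearEquiv 𝕜 𝕜).symm).toLinearMap, hcontY⟩ : 𝕜 →L[𝕜] Y)
    have him : (⟨((Shrink.linearEquiv 𝕜 𝕜).symm).toLinearMap, hcontY⟩ : 𝕜 →L[𝕜] Y) '' (f '' s)
        = F '' s := by
      rw [← Set.image_comp]; rfl
    rw [him] at h2
    exact h2
  have hFc : @Continuous X Y t tY F :=
    hborn Y inferInstance inferInstance inferInstance htower tY hlch F hbY
  have : @Continuous X 𝕜 t _ (((equivShrink 𝕜).symm : Y → 𝕜) ∘ F) :=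
    @Continuous.comp X Y 𝕜 t tY _ _ _ continuous_induced_dom hFc
  have hid : (((equivShrink 𝕜).symm : Y → 𝕜) ∘ F) = f := by
    funext x
    show (equivShrink 𝕜).symm (((Shrink.linearEquiv 𝕜 𝕜).symm) (f x)) = f x
    show (equivShrink 𝕜).symm ((equivShrink 𝕜) (f x)) = f x
    simp
  rwa [hid] at this

/-- A functional whose restriction to each `t`-bounded set is `tt`-continuous maps
`t`-bounded sets to bounded sets (under the gamma/BtB hypotheses). -/
lemma myaux_bdual_bounded (t tt g : TopologicalSpace X)
    (hg : IsGamma 𝕜 X t tt g)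
    (hBtB : ∀ s : Set X, VNB 𝕜 X t s ↔ VNB 𝕜 X g s)
    (f : X →ₗ[𝕜] 𝕜) (hf : f ∈ bdual 𝕜 X t tt)
    {s : Set X} (hs : VNB 𝕜 X t s) :
    Bornology.IsVonNBounded 𝕜 (f '' s) := by
  by_contra hub
  have hub' : ∀ C : ℝ, ∃ x ∈ s, C < ‖f x‖ := by
    intro C
    by_contra h
    push_neg at h
    refine hub ((NormedSpace.isVonNBounded_iff 𝕜).mpr (isBounded_iff_forall_norm_le.mpr
      ⟨C, ?_⟩))
    rintro z ⟨x, hx, rfl⟩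
    exact h x hx
  choose x hxs hxn using fun n : ℕ => hub' (((n : ℝ) + 1) ^ 2)
  set c : ℕ → 𝕜 := fun n => (((n : ℕ) : 𝕜) + 1)⁻¹ with hc
  have hcn : ∀ n : ℕ, ‖c n‖ = ((n : ℝ) + 1)⁻¹ := by
    intro n
    rw [hc, norm_inv]
    congr 1
    rw [show ((n : ℕ) : 𝕜) + 1 = (((n + 1 : ℕ)) : 𝕜) by push_cast; ring]
    rw [RCLike.norm_natCast]
    push_cast; ring
  have hc0 : Filter.Tendsto c atTop (𝓝 (0 : 𝕜)) := by
    rw [tendsto_zero_iff_norm_tendsto_zero]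
    simp only [hcn]
    simpa only [one_div] using tendsto_one_div_add_atTop_nhds_zero_nat (𝕜 := ℝ)
  set y : ℕ → X := c • x with hy
  have hy0 : Filter.Tendsto y atTop (@nhds X g 0) := by
    letI := g
    exact ((hBtB s).mp hs).smul_tendsto_zero (Filter.Eventually.of_forall hxs) hc0
  set S : Set X := insert 0 (Set.range y) with hS
  have hSg : VNB 𝕜 X g S := by
    letI := g
    haveI := hg.1.tag
    haveI := hg.1.csmul
    exact (Filter.Tendsto.isVonNBounded_range 𝕜 hy0).insert 0
  have hSt : VNB 𝕜 X t S := (hBtB S).mpr hSg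
  have hAg : TopologicalSpace.induced ((↑) : S → X) g
      = TopologicalSpace.induced ((↑) : S → X) tt := hg.2.1 S hSt
  have h0S : (0 : X) ∈ S := Set.mem_insert _ _
  have hyS : ∀ n, y n ∈ S := fun n => Set.mem_insert_of_mem _ ⟨n, rfl⟩
  have h1 : Filter.Tendsto (fun n => (⟨y n, hyS n⟩ : S)) atTop
      (@nhds S (TopologicalSpace.induced ((↑) : S → X) g) ⟨0, h0S⟩) := by
    rw [nhds_induced, Filter.tendsto_comap_iff]
    exact hy0
  rw [hAg] at h1
  letI := tt
  have h2 : Filter.Tendsto y atTop (nhdsWithin (0 : X) S) := by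
    rw [← map_nhds_subtype_val (⟨0, h0S⟩ : S)]
    exact Filter.tendsto_map.comp h1
  have h4 : Filter.Tendsto (fun n => f (y n)) atTop (𝓝 (f 0)) :=
    ((hf S hSt 0 h0S).tendsto).comp h2
  rw [map_zero] at h4
  have h5 : ∀ n : ℕ, (1 : ℝ) ≤ ‖f (y n)‖ := by
    intro n
    have hyn : f (y n) = c n • f (x n) := by
      show f (c n • x n) = _
      rw [map_smul]
    rw [hyn, norm_smul, hcn n]
    have hx := hxn n
    have hpos : (0 : ℝ) < (n : ℝ) + 1 := by positivity
    calc (1 : ℝ) ≤ ((n : ℝ) + 1)⁻¹ * ((n : ℝ) + 1) ^ 2 := by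
          rw [pow_two, ← mul_assoc, inv_mul_cancel₀ hpos.ne', one_mul]
          have : (0 : ℝ) ≤ (n : ℝ) := Nat.cast_nonneg n
          linarith
      _ ≤ ((n : ℝ) + 1)⁻¹ * ‖f (x n)‖ := by
          have hinv : (0 : ℝ) ≤ ((n : ℝ) + 1)⁻¹ := by positivity
          exact mul_le_mul_of_nonneg_left hx.le hinv
  have h6 : Filter.Tendsto (fun n => ‖f (y n)‖) atTop (𝓝 (0 : ℝ)) := by
    simpa using h4.norm
  obtain ⟨n, hn⟩ := (h6.eventually (gt_mem_nhds (by norm_num : (0 : ℝ) < 1))).exists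
  exact absurd (h5 n) (not_le.mpr hn)

/-- `(X,γ̃)' = X'_{B,τ̃}`. -/
lemma myaux_dual_eq (t tt g : TopologicalSpace X)
    (hborn : Bornological.{u, v, w} 𝕜 X t) (ht : IsLCH 𝕜 X t)
    (hg : IsGamma 𝕜 X t tt g)
    (hBtB : ∀ s : Set X, VNB 𝕜 X t s ↔ VNB 𝕜 X g s) :
    dualSub 𝕜 X g = bdual 𝕜 X t tt := by
  ext f
  constructor
  · intro hf
    -- g-continuous implies tt-continuous on every bounded set
    intro s hs
    have hAg := hg.2.1 s hs
    have hres : @Continuous s 𝕜 (TopologicalSpace.induced ((↑) : s → X) g) _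
        (f ∘ ((↑) : s → X)) :=
      @Continuous.comp s X 𝕜 (TopologicalSpace.induced ((↑) : s → X) g) g _ _ _
        hf continuous_induced_dom
    rw [hAg] at hres
    letI := tt
    exact continuousOn_iff_continuous_restrict.mpr hres
  · intro hf
    have hb : ∀ s : Set X, VNB 𝕜 X t s → Bornology.IsVonNBounded 𝕜 (f '' s) :=
      fun s hs => myaux_bdual_bounded t tt g hg hBtB f hf hs
    set g' : TopologicalSpace X :=
      g ⊓ TopologicalSpace.induced f (inferInstance : TopologicalSpace 𝕜) with hg'
    have hlch' : IsLCH 𝕜 X g' := by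
      constructor
      · exact topologicalAddGroup_inf hg.1.tag (topologicalAddGroup_induced f)
      · exact @continuousSMul_inf 𝕜 X _ _ g
          (TopologicalSpace.induced f (inferInstance : TopologicalSpace 𝕜))
          hg.1.csmul (continuousSMul_induced f.toMulActionHom)
      · exact t2Space_antitone (inf_le_left :
          g' ≤ g) hg.1.t2
      · exact LocallyConvexSpace.inf hg.1.lcs
          (LocallyConvexSpace.induced (f.restrictScalars ℝ))
    have hAg' : AgreeOnBounded 𝕜 X t tt g' := by
      intro s hs
      rw [hg', induced_inf, hg.2.1 s hs, induced_compose]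
      apply inf_eq_left.mpr
      have hres : @Continuous s 𝕜 (TopologicalSpace.induced ((↑) : s → X) tt) _
          (f ∘ ((↑) : s → X)) := by
        letI := tt
        exact continuousOn_iff_continuous_restrict.mp (hf s hs)
      exact continuous_iff_le_induced.mp hres
    have hle : g ≤ TopologicalSpace.induced f (inferInstance : TopologicalSpace 𝕜) :=
      le_trans (hg.2.2 g' hlch' hAg') inf_le_right
    exact continuous_iff_le_induced.mpr hle

/-- `(X,γ̃)' ⊆ (X,τ)'`. -/
lemma myaux_hsub (t g : TopologicalSpace X)
    (hborn : Bornological.{u, v, w} 𝕜 X t) (ht : IsLCH 𝕜 X t)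
    (hBtB : ∀ s : Set X, VNB 𝕜 X t s ↔ VNB 𝕜 X g s) :
    ∀ f : X →ₗ[𝕜] 𝕜, f ∈ dualSub 𝕜 X g → f ∈ dualSub 𝕜 X t := by
  intro f hf
  apply myaux_cont_of_bounded t hborn ht f
  intro s hs
  exact myaux_image_vnb g f hf ((hBtB s).mp hs)

/-- Generic completeness: a submodule of linear functionals whose image in
`X →ᵤ[𝔖] 𝕜` is closed is complete in the induced topology. -/
lemma myaux_completeTop (𝔖 : Set (Set X)) (D : Submodule 𝕜 (X →ₗ[𝕜] 𝕜))
    (hcl : IsClosed (Set.range (fun f : ↥D =>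
      UniformOnFun.ofFun 𝔖 (((f : X →ₗ[𝕜] 𝕜) : X → 𝕜))))) :
    CompleteTop ↥D (TopologicalSpace.induced
      (fun f : ↥D => (((f : X →ₗ[𝕜] 𝕜)) : X → 𝕜)) (funUC 𝕜 X 𝔖)) := by
  set j : ↥D → UniformOnFun X 𝕜 𝔖 :=
    fun f => UniformOnFun.ofFun 𝔖 (((f : X →ₗ[𝕜] 𝕜) : X → 𝕜)) with hj
  letI U : UniformSpace ↥D := UniformSpace.comap j (UniformOnFun.uniformSpace X 𝕜 𝔖)
  have htopeq : U.toTopologicalSpace = TopologicalSpace.induced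
      (fun f : ↥D => (((f : X →ₗ[𝕜] 𝕜)) : X → 𝕜)) (funUC 𝕜 X 𝔖) := by
    rw [show funUC 𝕜 X 𝔖 = TopologicalSpace.induced (UniformOnFun.ofFun 𝔖)
      (UniformOnFun.topologicalSpace X 𝕜 𝔖) from rfl, induced_compose]
    rfl
  haveI : @IsUniformAddGroup ↥D U _ :=
    IsUniformAddGroup.comap (⟨⟨j, rfl⟩, fun _ _ => rfl⟩ : ↥D →+ UniformOnFun X 𝕜 𝔖)
  have hUI : @IsUniformInducing ↥D _ U _ j := ⟨rfl⟩
  haveI hcs : @CompleteSpace ↥D U :=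
    (completeSpace_iff_isComplete_range hUI).mpr hcl.isComplete
  haveI hTAG : @IsTopologicalAddGroup ↥D (TopologicalSpace.induced
      (fun f : ↥D => (((f : X →ₗ[𝕜] 𝕜)) : X → 𝕜)) (funUC 𝕜 X 𝔖)) _ :=
    by rw [← htopeq]; exact inferInstance
  refine ⟨hTAG, ?_⟩
  have hus : @IsTopologicalAddGroup.rightUniformSpace ↥D _ (TopologicalSpace.induced
      (fun f : ↥D => (((f : X →ₗ[𝕜] 𝕜)) : X → 𝕜)) (funUC 𝕜 X 𝔖)) hTAG = U := by
    revert hTAG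
    rw [← htopeq]
    intro hTAG
    exact @IsUniformAddGroup.rightUniformSpace_eq ↥D U _ _
  rw [hus]
  exact hcs

/-- The set of functions that are linear is closed in `X →ᵤ[𝔖] 𝕜` when singletons
belong (pointwise-closed conditions). -/
lemma myaux_isClosed_lin (t : TopologicalSpace X) (ht : IsLCH 𝕜 X t) :
    IsClosed {F : UniformOnFun X 𝕜 {s : Set X | VNB 𝕜 X t s} |
      (∀ x y : X, UniformOnFun.toFun _ F (x + y)
          = UniformOnFun.toFun _ F x + UniformOnFun.toFun _ F y) ∧
      (∀ (c : 𝕜) (x : X), UniformOnFun.toFun _ F (c • x)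
          = c • UniformOnFun.toFun _ F x)} := by
  set 𝔖 : Set (Set X) := {s : Set X | VNB 𝕜 X t s} with h𝔖
  have hev : ∀ x : X, Continuous (fun F : UniformOnFun X 𝕜 𝔖 =>
      UniformOnFun.toFun 𝔖 F x) := by
    intro x
    have hx : {x} ∈ 𝔖 := by
      letI := t
      haveI := ht.csmul
      exact Bornology.isVonNBounded_singleton x
    exact (UniformOnFun.uniformContinuous_eval_of_mem 𝕜 𝔖 (Set.mem_singleton x) hx).continuous
  have h1 : IsClosed {F : UniformOnFun X 𝕜 𝔖 |
      ∀ x y : X, UniformOnFun.toFun 𝔖 F (x + y)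
        = UniformOnFun.toFun 𝔖 F x + UniformOnFun.toFun 𝔖 F y} := by
    rw [Set.setOf_forall]
    refine isClosed_iInter fun x => ?_
    rw [Set.setOf_forall]
    exact isClosed_iInter fun y => isClosed_eq (hev _) ((hev _).add (hev _))
  have h2 : IsClosed {F : UniformOnFun X 𝕜 𝔖 |
      ∀ (c : 𝕜) (x : X), UniformOnFun.toFun 𝔖 F (c • x)
        = c • UniformOnFun.toFun 𝔖 F x} := by
    rw [Set.setOf_forall]
    refine isClosed_iInter fun c => ?_
    rw [Set.setOf_forall]
    exact isClosed_iInter fun x => isClosed_eq (hev _) ((hev _).const_smul c)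
  exact h1.inter h2

/-- The set of functions bounded on each member of `𝔖` is closed. -/
lemma myaux_isClosed_bdd (t : TopologicalSpace X) :
    IsClosed {F : UniformOnFun X 𝕜 {s : Set X | VNB 𝕜 X t s} |
      ∀ s : Set X, VNB 𝕜 X t s →
        Bornology.IsBounded (UniformOnFun.toFun _ F '' s)} := by
  set 𝔖 : Set (Set X) := {s : Set X | VNB 𝕜 X t s} with h𝔖
  refine isClosed_of_closure_subset ?_
  intro F hF s hs
  have hnb : 𝔖.Nonempty := ⟨∅, Bornology.isVonNBounded_empty 𝕜 X⟩
  have hdir : DirectedOn (· ⊆ ·) 𝔖 := fun a ha b hb =>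
    ⟨a ∪ b, Bornology.IsVonNBounded.union ha hb, Set.subset_union_left,
      Set.subset_union_right⟩
  have hbasis := UniformOnFun.hasBasis_nhds X 𝕜 𝔖 F hnb hdir
  have hV : {p : 𝕜 × 𝕜 | dist p.1 p.2 < 1} ∈ uniformity 𝕜 :=
    Metric.dist_mem_uniformity one_pos
  have hmem : {G : UniformOnFun X 𝕜 𝔖 |
      (G, F) ∈ UniformOnFun.gen 𝔖 s {p : 𝕜 × 𝕜 | dist p.1 p.2 < 1}} ∈ 𝓝 F :=
    hbasis.mem_of_mem (i := (s, {p : 𝕜 × 𝕜 | dist p.1 p.2 < 1})) ⟨hs, hV⟩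
  obtain ⟨G, hG1, hG2⟩ := mem_closure_iff_nhds.mp hF _ hmem
  obtain ⟨C, hC⟩ := isBounded_iff_forall_norm_le.mp (hG2 s hs)
  refine isBounded_iff_forall_norm_le.mpr ⟨C + 1, ?_⟩
  rintro z ⟨x, hx, rfl⟩
  have h1 : dist (UniformOnFun.toFun 𝔖 G x) (UniformOnFun.toFun 𝔖 F x) < 1 := hG1 x hx
  have h2 : ‖UniformOnFun.toFun 𝔖 G x‖ ≤ C := hC _ ⟨x, hx, rfl⟩
  have h3 : ‖UniformOnFun.toFun 𝔖 F x‖ - ‖UniformOnFun.toFun 𝔖 G x‖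
      ≤ ‖UniformOnFun.toFun 𝔖 F x - UniformOnFun.toFun 𝔖 G x‖ :=
    norm_sub_norm_le _ _
  rw [← dist_eq_norm, dist_comm] at h3
  linarith

/-- The set of functions whose restriction to `s` is `tt`-continuous is closed. -/
lemma myaux_isClosed_ctt (t tt : TopologicalSpace X) {s : Set X} (hs : VNB 𝕜 X t s) :
    IsClosed {F : UniformOnFun X 𝕜 {s : Set X | VNB 𝕜 X t s} |
      @Continuous s 𝕜 (TopologicalSpace.induced ((↑) : s → X) tt) _
        (s.restrict (UniformOnFun.toFun _ F))} := by
  set 𝔖 : Set (Set X) := {s : Set X | VNB 𝕜 X t s} with h𝔖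
  letI : TopologicalSpace s := TopologicalSpace.induced ((↑) : s → X) tt
  have hrc : Continuous (UniformFun.ofFun ∘ (s.restrict : (X → 𝕜) → s → 𝕜)
      ∘ UniformOnFun.toFun 𝔖) :=
    (UniformOnFun.uniformContinuous_restrict X 𝕜 𝔖 hs).continuous
  have hcl : IsClosed {h : UniformFun s 𝕜 | Continuous (UniformFun.toFun h)} :=
    UniformFun.isClosed_setOf_continuous s
  exact hcl.preimage hrc

end MyAux

/-- Under condition (BτBγ̃) for a bornological locally convex Hausdorff
space `(X, τ)`: `(X, γ̃)'` is a closed subspace of the complete space `(X, τ)'_b`;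
`(X, γ̃)' = X'_{B,τ̃}`; the strong topology `β((X,γ̃)', (X,γ̃))` equals the topology `β`
of uniform convergence on `τ`-bounded sets and equals the topology induced by
`β((X,τ)', (X,τ))`; in particular `(X, γ̃)'_b` is complete. -/
theorem statement10 {𝕜 : Type u} [RCLike 𝕜]
    {X : Type v} [AddCommGroup X] [Module 𝕜 X] [Module ℝ X] [IsScalarTower ℝ 𝕜 X]
    (t tt g : TopologicalSpace X) (hborn : Bornological 𝕜 X t)
    (ht : IsLCH 𝕜 X t) (htt : IsLCH 𝕜 X tt) (hg : IsGamma 𝕜 X t tt g)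
    (hBtB : ∀ s : Set X, VNB 𝕜 X t s ↔ VNB 𝕜 X g s) :
    ∃ hsub : ∀ f : X →ₗ[𝕜] 𝕜, f ∈ dualSub 𝕜 X g → f ∈ dualSub 𝕜 X t,
      @IsClosed ↥(dualSub 𝕜 X t) (strongDualTop 𝕜 X t)
        {f : ↥(dualSub 𝕜 X t) | (f : X →ₗ[𝕜] 𝕜) ∈ dualSub 𝕜 X g} ∧
      CompleteTop ↥(dualSub 𝕜 X t) (strongDualTop 𝕜 X t) ∧
      dualSub 𝕜 X g = bdual 𝕜 X t tt ∧
      strongDualTop 𝕜 X g = dualTopOn 𝕜 X g {s : Set X | VNB 𝕜 X t s} ∧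
      strongDualTop 𝕜 X g = TopologicalSpace.induced
        (fun f : ↥(dualSub 𝕜 X g) =>
          (⟨(f : X →ₗ[𝕜] 𝕜), hsub _ f.2⟩ : ↥(dualSub 𝕜 X t)))
        (strongDualTop 𝕜 X t) ∧
      CompleteTop ↥(dualSub 𝕜 X g) (strongDualTop 𝕜 X g) := by
  classical
  set 𝔖 : Set (Set X) := {s : Set X | VNB 𝕜 X t s} with h𝔖
  have hdeq : dualSub 𝕜 X g = bdual 𝕜 X t tt := myaux_dual_eq t tt g hborn ht hg hBtB
  have hsub : ∀ f : X →ₗ[𝕜] 𝕜, f ∈ dualSub 𝕜 X g → f ∈ dualSub 𝕜 X t :=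
    myaux_hsub t g hborn ht hBtB
  -- closedness of the "continuous on bounded sets" conditions
  have hCttAll : IsClosed {F : UniformOnFun X 𝕜 𝔖 | ∀ s : Set X, VNB 𝕜 X t s →
      @Continuous s 𝕜 (TopologicalSpace.induced ((↑) : s → X) tt) _
        (s.restrict (UniformOnFun.toFun 𝔖 F))} := by
    rw [Set.setOf_forall]
    refine isClosed_iInter fun s => ?_
    rw [Set.setOf_forall]
    exact isClosed_iInter fun hs => myaux_isClosed_ctt t tt hs
  have hmemCtt : ∀ f : X →ₗ[𝕜] 𝕜, f ∈ bdual 𝕜 X t tt ↔ ∀ s : Set X, VNB 𝕜 X t s →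
      @Continuous s 𝕜 (TopologicalSpace.induced ((↑) : s → X) tt) _ (s.restrict ⇑f) := by
    intro f
    constructor
    · intro hf s hs
      letI := tt
      exact continuousOn_iff_continuous_restrict.mp (hf s hs)
    · intro h s hs
      letI := tt
      exact continuousOn_iff_continuous_restrict.mpr (h s hs)
  -- continuity of the embedding of the τ-dual into the function space
  have hjt : @Continuous _ _ (strongDualTop 𝕜 X t) _
      (fun f : ↥(dualSub 𝕜 X t) => UniformOnFun.ofFun 𝔖 (((f : X →ₗ[𝕜] 𝕜)) : X → 𝕜)) :=
    @Continuous.comp _ _ _ (strongDualTop 𝕜 X t) (funUC 𝕜 X 𝔖) _ _ _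
      continuous_induced_dom continuous_induced_dom
  -- the closedness statement
  have hclosedE : @IsClosed ↥(dualSub 𝕜 X t) (strongDualTop 𝕜 X t)
      {f : ↥(dualSub 𝕜 X t) | (f : X →ₗ[𝕜] 𝕜) ∈ dualSub 𝕜 X g} := by
    have hEset : {f : ↥(dualSub 𝕜 X t) | (f : X →ₗ[𝕜] 𝕜) ∈ dualSub 𝕜 X g} =
        (fun f : ↥(dualSub 𝕜 X t) => UniformOnFun.ofFun 𝔖 (((f : X →ₗ[𝕜] 𝕜)) : X → 𝕜)) ⁻¹'
        {F : UniformOnFun X 𝕜 𝔖 | ∀ s : Set X, VNB 𝕜 X t s →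
          @Continuous s 𝕜 (TopologicalSpace.induced ((↑) : s → X) tt) _
            (s.restrict (UniformOnFun.toFun 𝔖 F))} := by
      ext f
      simp only [Set.mem_setOf_eq, Set.mem_preimage]
      rw [hdeq]
      exact hmemCtt (f : X →ₗ[𝕜] 𝕜)
    rw [hEset]
    exact @IsClosed.preimage _ _ (strongDualTop 𝕜 X t) _ _ hjt _ hCttAll
  -- range of the τ-dual in the function space
  have hranget : Set.range (fun f : ↥(dualSub 𝕜 X t) =>
      UniformOnFun.ofFun 𝔖 (((f : X →ₗ[𝕜] 𝕜)) : X → 𝕜)) =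
      {F : UniformOnFun X 𝕜 𝔖 |
        (∀ x y : X, UniformOnFun.toFun 𝔖 F (x + y)
            = UniformOnFun.toFun 𝔖 F x + UniformOnFun.toFun 𝔖 F y) ∧
        (∀ (c : 𝕜) (x : X), UniformOnFun.toFun 𝔖 F (c • x)
            = c • UniformOnFun.toFun 𝔖 F x)} ∩
      {F : UniformOnFun X 𝕜 𝔖 | ∀ s : Set X, VNB 𝕜 X t s →
        Bornology.IsBounded (UniformOnFun.toFun 𝔖 F '' s)} := by
    ext F
    constructor
    · rintro ⟨f, rfl⟩
      refine ⟨⟨fun x y => map_add (f : X →ₗ[𝕜] 𝕜) x y,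
        fun c x => map_smul (f : X →ₗ[𝕜] 𝕜) c x⟩, fun s hs => ?_⟩
      exact (NormedSpace.isVonNBounded_iff 𝕜).mp (myaux_image_vnb t _ f.2 hs)
    · rintro ⟨⟨hadd, hsmul⟩, hbdd⟩
      set f : X →ₗ[𝕜] 𝕜 :=
        { toFun := UniformOnFun.toFun 𝔖 F
          map_add' := hadd
          map_smul' := hsmul } with hf
      have hc : f ∈ dualSub 𝕜 X t := myaux_cont_of_bounded t hborn ht f
        (fun s hs => (NormedSpace.isVonNBounded_iff 𝕜).mpr (hbdd s hs))
      exact ⟨⟨f, hc⟩, rfl⟩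
  have hcompt : CompleteTop ↥(dualSub 𝕜 X t) (strongDualTop 𝕜 X t) := by
    refine myaux_completeTop 𝔖 (dualSub 𝕜 X t) ?_
    rw [hranget]
    exact (myaux_isClosed_lin t ht).inter (myaux_isClosed_bdd t)
  -- the topology identification for the γ̃-dual
  have h5 : strongDualTop 𝕜 X g = dualTopOn 𝕜 X g {s : Set X | VNB 𝕜 X t s} := by
    have hset : {s : Set X | VNB 𝕜 X g s} = {s : Set X | VNB 𝕜 X t s} :=
      Set.ext fun s => (hBtB s).symm
    show dualTopOn 𝕜 X g {s : Set X | VNB 𝕜 X g s} = _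
    rw [hset]
  have h6 : strongDualTop 𝕜 X g = TopologicalSpace.induced
      (fun f : ↥(dualSub 𝕜 X g) =>
        (⟨(f : X →ₗ[𝕜] 𝕜), hsub _ f.2⟩ : ↥(dualSub 𝕜 X t)))
      (strongDualTop 𝕜 X t) := by
    rw [h5]
    rw [show strongDualTop 𝕜 X t = TopologicalSpace.induced
      (fun f : ↥(dualSub 𝕜 X t) => (((f : X →ₗ[𝕜] 𝕜)) : X → 𝕜)) (funUC 𝕜 X 𝔖) from rfl]
    rw [induced_compose]
    rfl
  -- completeness of the γ̃-dual
  have hcompg : CompleteTop ↥(dualSub 𝕜 X g) (strongDualTop 𝕜 X g) := by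
    rw [h5]
    refine myaux_completeTop 𝔖 (dualSub 𝕜 X g) ?_
    have hrangeg : Set.range (fun f : ↥(dualSub 𝕜 X g) =>
        UniformOnFun.ofFun 𝔖 (((f : X →ₗ[𝕜] 𝕜)) : X → 𝕜)) =
        ({F : UniformOnFun X 𝕜 𝔖 |
          (∀ x y : X, UniformOnFun.toFun 𝔖 F (x + y)
              = UniformOnFun.toFun 𝔖 F x + UniformOnFun.toFun 𝔖 F y) ∧
          (∀ (c : 𝕜) (x : X), UniformOnFun.toFun 𝔖 F (c • x)
              = c • UniformOnFun.toFun 𝔖 F x)} ∩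
        {F : UniformOnFun X 𝕜 𝔖 | ∀ s : Set X, VNB 𝕜 X t s →
          Bornology.IsBounded (UniformOnFun.toFun 𝔖 F '' s)}) ∩
        {F : UniformOnFun X 𝕜 𝔖 | ∀ s : Set X, VNB 𝕜 X t s →
          @Continuous s 𝕜 (TopologicalSpace.induced ((↑) : s → X) tt) _
            (s.restrict (UniformOnFun.toFun 𝔖 F))} := by
      ext F
      constructor
      · rintro ⟨f, rfl⟩
        have hfb : (f : X →ₗ[𝕜] 𝕜) ∈ bdual 𝕜 X t tt := by rw [← hdeq]; exact f.2
        refine ⟨⟨⟨fun x y => map_add (f : X →ₗ[𝕜] 𝕜) x y,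
          fun c x => map_smul (f : X →ₗ[𝕜] 𝕜) c x⟩, fun s hs => ?_⟩, ?_⟩
        · exact (NormedSpace.isVonNBounded_iff 𝕜).mp
            (myaux_image_vnb g _ f.2 ((hBtB s).mp hs))
        · exact (hmemCtt (f : X →ₗ[𝕜] 𝕜)).mp hfb
      · rintro ⟨⟨⟨hadd, hsmul⟩, _⟩, hctt⟩
        set f : X →ₗ[𝕜] 𝕜 :=
          { toFun := UniformOnFun.toFun 𝔖 F
            map_add' := hadd
            map_smul' := hsmul } with hf
        have hfb : f ∈ bdual 𝕜 X t tt := (hmemCtt f).mpr hctt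
        have hfg : f ∈ dualSub 𝕜 X g := by rw [hdeq]; exact hfb
        exact ⟨⟨f, hfg⟩, rfl⟩
    rw [hrangeg]
    exact (((myaux_isClosed_lin t ht).inter (myaux_isClosed_bdd t)).inter hCttAll)
  exact ⟨hsub, hclosedE, hcompt, hdeq, h5, h6, hcompg⟩
end

section
/- Let (X, τ) be a bornological locally convex Hausdorff space, τ̃ a locally convex Hausdorff topology on X, γ̃ = γ̃(τ, τ̃) the finest locally convex Hausdorff topology on X which coincides with τ̃ on every τ-bounded set, and assume a subset of X is τ-bounded iff it is γ̃-bounded. If (X, τ) satisfies (BBCl) for τ̃, then the dual (X, γ̃)' is the closure of (X, τ̃)' in (X, τ)'_b (closure with respect to the strong topology β((X,τ)', (X,τ))). -/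
open Topology Filter Set

universe u v w

set_option linter.unusedSectionVars false

section Helpers

variable {𝕜 : Type u} [RCLike 𝕜]
variable {X : Type v} [AddCommGroup X] [Module 𝕜 X] [Module ℝ X] [IsScalarTower ℝ 𝕜 X]

theorem mem_dualSub_iff {t : TopologicalSpace X} {f : X →ₗ[𝕜] 𝕜} :
    f ∈ dualSub 𝕜 X t ↔ @Continuous X 𝕜 t _ f := Iff.rfl

/-- Transfer `ContinuousOn` along an equality of induced topologies. -/
theorem contOn_transfer {t1 t2 : TopologicalSpace X} {s : Set X}
    (h : TopologicalSpace.induced ((↑) : s → X) t1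
       = TopologicalSpace.induced ((↑) : s → X) t2)
    {f : X → 𝕜} (hf : @ContinuousOn X 𝕜 t1 _ f s) : @ContinuousOn X 𝕜 t2 _ f s := by
  have hf' : @Continuous (↥s) 𝕜 (TopologicalSpace.induced ((↑) : s → X) t1) _ (s.restrict f) := by
    letI := t1
    exact continuousOn_iff_continuous_restrict.mp hf
  rw [h] at hf'
  letI := t2
  exact continuousOn_iff_continuous_restrict.mpr hf'

/-- A linear functional whose restriction to every `t`-bounded set is `tt`-continuous is
`γ̃`-continuous. -/
theorem continuous_gamma_of_contOn {t tt g : TopologicalSpace X}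
    (hg : IsGamma 𝕜 X t tt g) (f : X →ₗ[𝕜] 𝕜)
    (hf : ∀ s : Set X, VNB 𝕜 X t s → @ContinuousOn X 𝕜 tt _ f s) :
    @Continuous X 𝕜 g _ f := by
  obtain ⟨⟨tag, csmul, t2, lcs⟩, hagree, hmin⟩ := hg
  set tf : TopologicalSpace X := TopologicalSpace.induced (f : X → 𝕜) inferInstance with htf
  have htag' : @IsTopologicalAddGroup X tf _ := topologicalAddGroup_induced f
  have hLCH : IsLCH 𝕜 X (g ⊓ tf) := by
    refine ⟨?_, ?_, ?_, ?_⟩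
    · exact @topologicalAddGroup_inf X _ g tf tag htag'
    · exact @continuousSMul_inf 𝕜 X _ _ g tf csmul (continuousSMul_induced f)
    · exact t2Space_antitone inf_le_left t2
    · exact LocallyConvexSpace.inf lcs (LocallyConvexSpace.induced (f.restrictScalars ℝ))
  have hagree' : AgreeOnBounded 𝕜 X t tt (g ⊓ tf) := by
    intro s hs
    have h1 := hagree s hs
    have h2 : TopologicalSpace.induced ((↑) : s → X) tt
        ≤ TopologicalSpace.induced ((↑) : s → X) tf := by
      have hc : @Continuous (↥s) 𝕜 (TopologicalSpace.induced ((↑) : s → X) tt) _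
          (s.restrict (f : X → 𝕜)) := by
        letI := tt
        exact continuousOn_iff_continuous_restrict.mp (hf s hs)
      have hle := @continuous_iff_le_induced (↥s) 𝕜 (s.restrict (f : X → 𝕜))
        (TopologicalSpace.induced ((↑) : s → X) tt) _ |>.mp hc
      have heq : TopologicalSpace.induced ((↑) : s → X) tf
          = TopologicalSpace.induced (s.restrict (f : X → 𝕜))
              (inferInstance : TopologicalSpace 𝕜) := induced_compose
      rw [heq]
      exact hle
    rw [induced_inf, h1, inf_eq_left.mpr h2]
  have hle : g ≤ tf := le_trans (hmin _ hLCH hagree') inf_le_right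
  exact (@continuous_iff_le_induced X 𝕜 (f : X → 𝕜) g _).mpr hle

/-- Conversely, a `γ̃`-continuous map is `tt`-continuous on every `t`-bounded set. -/
theorem contOn_tt_of_gamma {t tt g : TopologicalSpace X} (hg : IsGamma 𝕜 X t tt g)
    {f : X → 𝕜} (hf : @Continuous X 𝕜 g _ f) {s : Set X} (hs : VNB 𝕜 X t s) :
    @ContinuousOn X 𝕜 tt _ f s :=
  contOn_transfer (hg.2.1 s hs) (by letI := g; exact hf.continuousOn)

theorem small_rclike : Small.{w} 𝕜 :=
  ⟨⟨ULift.{w} (Fin (Module.finrank ℝ 𝕜) → ℝ),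
    ⟨((Module.finBasis ℝ 𝕜).equivFun.toEquiv).trans Equiv.ulift.symm⟩⟩⟩

/-- Using bornologicity (via a `Type w` copy of `𝕜`), a `g`-continuous functional is
`t`-continuous, provided `t`-bounded and `g`-bounded sets coincide. -/
theorem cont_t_of_cont_g {t g : TopologicalSpace X}
    (hborn : Bornological.{u, v, w} 𝕜 X t)
    (hBtB : ∀ s : Set X, VNB 𝕜 X t s ↔ VNB 𝕜 X g s)
    (f : X →ₗ[𝕜] 𝕜) (hf : @Continuous X 𝕜 g _ f) :
    @Continuous X 𝕜 t _ f := by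
  haveI : Small.{w} 𝕜 := small_rclike
  haveI : IsScalarTower ℝ 𝕜 (Shrink.{w} 𝕜) := by
    constructor
    intro r c y
    apply (equivShrink 𝕜).symm.injective
    rw [equivShrink_symm_smul, equivShrink_symm_smul, equivShrink_symm_smul]
    exact smul_assoc r c _
  set e : 𝕜 ≃ₗ[𝕜] Shrink.{w} 𝕜 := (Shrink.linearEquiv 𝕜 𝕜).symm with he
  set el : Shrink.{w} 𝕜 →ₗ[𝕜] 𝕜 := e.symm.toLinearMap with hel
  letI tY : TopologicalSpace (Shrink.{w} 𝕜) :=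
    TopologicalSpace.induced (el : Shrink.{w} 𝕜 → 𝕜) inferInstance
  have hYlch : IsLCH 𝕜 (Shrink.{w} 𝕜) tY := by
    refine ⟨?_, ?_, ?_, ?_⟩
    · exact topologicalAddGroup_induced el
    · exact continuousSMul_induced el
    · exact @Topology.IsEmbedding.t2Space _ _ tY _ _ _ ⟨⟨rfl⟩, e.symm.injective⟩
    · exact LocallyConvexSpace.induced (el.restrictScalars ℝ)
  set f' : X →ₗ[𝕜] Shrink.{w} 𝕜 := e.toLinearMap ∘ₗ f with hf'
  have hbd : ∀ s : Set X, VNB 𝕜 X t s → VNB 𝕜 (Shrink.{w} 𝕜) tY (f' '' s) := by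
    intro s hs
    have hs' : VNB 𝕜 X g s := (hBtB s).mp hs
    have h1 : Bornology.IsVonNBounded 𝕜 ((f : X → 𝕜) '' s) := by
      letI := g
      exact hs'.image (⟨f, hf⟩ : X →L[𝕜] 𝕜)
    have hecont : @Continuous 𝕜 (Shrink.{w} 𝕜) _ tY (e : 𝕜 → Shrink.{w} 𝕜) := by
      refine (@continuous_iff_le_induced 𝕜 (Shrink.{w} 𝕜) (e : 𝕜 → Shrink.{w} 𝕜) _ tY).mpr ?_
      rw [induced_compose]
      have hcomp : ((el : Shrink.{w} 𝕜 → 𝕜) ∘ (e : 𝕜 → Shrink.{w} 𝕜)) = id := by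
        funext x
        exact e.symm_apply_apply x
      rw [hcomp, induced_id]
    have h2 : Bornology.IsVonNBounded 𝕜 ((e : 𝕜 → Shrink.{w} 𝕜) '' ((f : X → 𝕜) '' s)) := by
      letI := tY
      exact h1.image (⟨e.toLinearMap, hecont⟩ : 𝕜 →L[𝕜] Shrink.{w} 𝕜)
    have himg : (f' : X → Shrink.{w} 𝕜) '' s
        = (e : 𝕜 → Shrink.{w} 𝕜) '' ((f : X → 𝕜) '' s) := by
      rw [Set.image_image]
      rfl
    rw [VNB, himg]
    exact h2
  have hcont' : @Continuous X (Shrink.{w} 𝕜) t tY f' :=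
    hborn (Shrink.{w} 𝕜) inferInstance inferInstance inferInstance inferInstance tY hYlch f' hbd
  have helc : @Continuous (Shrink.{w} 𝕜) 𝕜 tY _ (el : Shrink.{w} 𝕜 → 𝕜) :=
    continuous_induced_dom
  letI := t
  exact (helc.comp hcont').congr fun x => e.symm_apply_apply (f x)

end Helpers
open Pointwise

section Core

variable {𝕜 : Type u} [RCLike 𝕜]
variable {X : Type v} [AddCommGroup X] [Module 𝕜 X] [Module ℝ X] [IsScalarTower ℝ 𝕜 X]

/-- The key Hahn-Banach decomposition: if `|f| ≤ 1` on `U ∩ B` with `U` an absolutely convex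
`tt`-neighbourhood of `0` and `B` absolutely convex containing `0`, then there is a
`tt`-continuous linear functional `gl` with `|f - gl| ≤ 1` on `B`. -/
theorem approx_core {tt : TopologicalSpace X} (htt : IsLCH 𝕜 X tt)
    {U B : Set X} (hU0 : U ∈ @nhds X tt 0)
    (hUbal : Balanced 𝕜 U) (hUconv : Convex ℝ U)
    (hBbal : Balanced 𝕜 B) (hBconv : Convex ℝ B) (hB0 : (0 : X) ∈ B)
    (f : X →ₗ[𝕜] 𝕜) (hfb : ∀ x ∈ U ∩ B, ‖f x‖ ≤ 1) :
    ∃ gl : X →ₗ[𝕜] 𝕜, @Continuous X 𝕜 tt _ gl ∧ ∀ b ∈ B, ‖f b - gl b‖ ≤ 1 := by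
  letI := tt
  haveI := htt.tag
  haveI := htt.csmul
  haveI := htt.lcs
  have hUabs : Absorbent ℝ U := by
    haveI : ContinuousSMul ℝ X :=
      ⟨(((continuous_algebraMap ℝ 𝕜).comp continuous_fst).smul continuous_snd).congr
        fun p => algebraMap_smul 𝕜 p.1 p.2⟩
    exact absorbent_nhds_zero hU0
  have hU0mem : (0 : X) ∈ U := mem_of_mem_nhds hU0
  -- Key inequality coming from `|f| ≤ 1` on `U ∩ B`.
  have key : ∀ s : ℝ, 0 ≤ s → ∀ b ∈ s • B, ‖f b‖ ≤ gauge U b + s := by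
    intro s hs b hb
    have hmax : ‖f b‖ ≤ max (gauge U b) s := by
      refine le_of_forall_pos_le_add fun ε hε => ?_
      set r : ℝ := max (gauge U b) s + ε with hr
      have hmax0 : 0 ≤ max (gauge U b) s := le_trans (gauge_nonneg b) (le_max_left _ _)
      have hrpos : 0 < r := by positivity
      have h1 : gauge U b < r := lt_of_le_of_lt (le_max_left _ _) (lt_add_of_pos_right _ hε)
      have hU' : r⁻¹ • b ∈ U := by
        have hlt : gauge U (r⁻¹ • b) < 1 := by
          rw [gauge_smul_of_nonneg (inv_nonneg.mpr hrpos.le), smul_eq_mul]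
          rw [← div_eq_inv_mul]
          exact (div_lt_one hrpos).mpr h1
        exact gauge_lt_one_subset_self hUconv hU0mem hUabs hlt
      have hB' : r⁻¹ • b ∈ B := by
        obtain ⟨b₀, hb₀, rfl⟩ := hb
        rw [smul_smul]
        have hns : ‖algebraMap ℝ 𝕜 (r⁻¹ * s)‖ ≤ 1 := by
          rw [norm_algebraMap', Real.norm_eq_abs, abs_of_nonneg (by positivity)]
          rw [← div_eq_inv_mul]
          exact div_le_one_of_le₀ (le_trans (le_max_right _ _)
            (le_of_lt (lt_add_of_pos_right _ hε))) hrpos.le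
        have hmem := hBbal.smul_mem hns hb₀
        rwa [algebraMap_smul] at hmem
      have hle1 := hfb _ ⟨hU', hB'⟩
      rw [f.map_smul_of_tower, norm_smul, Real.norm_eq_abs,
        abs_of_nonneg (inv_nonneg.mpr hrpos.le)] at hle1
      calc ‖f b‖ = r * (r⁻¹ * ‖f b‖) := by field_simp
        _ ≤ r * 1 := by
            exact mul_le_mul_of_nonneg_left hle1 hrpos.le
        _ = max (gauge U b) s + ε := by rw [mul_one]
    exact hmax.trans (max_le_add_of_nonneg (gauge_nonneg _) hs)
  -- The sublinear functional `N`.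
  set A : X → Set ℝ := fun x =>
    {r | ∃ s : ℝ, 0 ≤ s ∧ ∃ b ∈ s • B, r = gauge U (x + b) + s - RCLike.re (f b)} with hA
  have hAmem : ∀ x, gauge U x ∈ A x := by
    intro x
    refine ⟨0, le_refl 0, 0, ⟨0, hB0, smul_zero 0⟩, ?_⟩
    simp
  have hAlb : ∀ x, ∀ r ∈ A x, -(gauge U (-x)) ≤ r := by
    rintro x r ⟨s, hs, b, hb, rfl⟩
    have h1 : RCLike.re (f b) ≤ gauge U b + s := (RCLike.re_le_norm _).trans (key s hs b hb)
    have h2 : gauge U b ≤ gauge U (x + b) + gauge U (-x) := by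
      have h3 := gauge_add_le hUconv hUabs (x + b) (-x)
      have h4 : x + b + -x = b := by abel
      rwa [h4] at h3
    linarith
  have hAne : ∀ x, (A x).Nonempty := fun x => ⟨_, hAmem x⟩
  have hAbdd : ∀ x, BddBelow (A x) := fun x => ⟨_, fun r hr => hAlb x r hr⟩
  set N : X → ℝ := fun x => sInf (A x) with hN
  have hNle : ∀ x, ∀ r ∈ A x, N x ≤ r := fun x r hr => csInf_le (hAbdd x) hr
  have hNgauge : ∀ x, N x ≤ gauge U x := fun x => hNle x _ (hAmem x)
  have hNlb : ∀ x, -(gauge U (-x)) ≤ N x := fun x => le_csInf (hAne x) (hAlb x)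
  have hNadd : ∀ x y, N (x + y) ≤ N x + N y := by
    intro x y
    refine le_of_forall_pos_le_add fun ε hε => ?_
    obtain ⟨r, hr, hrlt⟩ := exists_lt_of_csInf_lt (hAne x)
      (lt_add_of_pos_right (N x) (half_pos hε))
    obtain ⟨r', hr', hrlt'⟩ := exists_lt_of_csInf_lt (hAne y)
      (lt_add_of_pos_right (N y) (half_pos hε))
    obtain ⟨s, hs, b, hb, rfl⟩ := hr
    obtain ⟨s', hs', b', hb', rfl⟩ := hr'
    have hmem : b + b' ∈ (s + s') • B := by
      rw [hBconv.add_smul hs hs']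
      exact Set.add_mem_add hb hb'
    have hrr : gauge U (x + y + (b + b')) + (s + s') - RCLike.re (f (b + b')) ∈ A (x + y) :=
      ⟨s + s', by positivity, b + b', hmem, rfl⟩
    have h3 : gauge U (x + y + (b + b')) ≤ gauge U (x + b) + gauge U (y + b') := by
      have heq : x + y + (b + b') = x + b + (y + b') := by abel
      rw [heq]
      exact gauge_add_le hUconv hUabs _ _
    have h4 := hNle _ _ hrr
    rw [map_add, map_add] at h4
    linarith
  have hNhom : ∀ c : ℝ, 0 < c → ∀ x, N (c • x) = c * N x := by
    have hle : ∀ c : ℝ, 0 < c → ∀ x, N (c • x) ≤ c * N x := by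
      intro c hc x
      have h1 : ∀ r ∈ A x, N (c • x) ≤ c * r := by
        rintro r ⟨s, hs, b, hb, rfl⟩
        have hmem : c • b ∈ (c * s) • B := by
          obtain ⟨b₀, hb₀, rfl⟩ := hb
          exact ⟨b₀, hb₀, (smul_smul c s b₀).symm⟩
        have h2 := hNle (c • x)
          (gauge U (c • x + c • b) + c * s - RCLike.re (f (c • b)))
          ⟨c * s, by positivity, c • b, hmem, rfl⟩
        rw [← smul_add, gauge_smul_of_nonneg hc.le, f.map_smul_of_tower, RCLike.smul_re,
          smul_eq_mul] at h2
        calc N (c • x) ≤ c * gauge U (x + b) + c * s - c * RCLike.re (f b) := h2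
          _ = c * (gauge U (x + b) + s - RCLike.re (f b)) := by ring
      have h2 : N (c • x) / c ≤ N x := by
        refine le_csInf (hAne x) fun r hr => ?_
        rw [div_le_iff₀ hc]
        calc N (c • x) ≤ c * r := h1 r hr
          _ = r * c := mul_comm _ _
      calc N (c • x) = N (c • x) / c * c := by field_simp
        _ ≤ N x * c := mul_le_mul_of_nonneg_right h2 hc.le
        _ = c * N x := mul_comm _ _
    intro c hc x
    refine le_antisymm (hle c hc x) ?_
    have h3 := hle c⁻¹ (inv_pos.mpr hc) (c • x)
    rw [inv_smul_smul₀ hc.ne' x] at h3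
    calc c * N x ≤ c * (c⁻¹ * N (c • x)) := mul_le_mul_of_nonneg_left h3 hc.le
      _ = N (c • x) := by field_simp
  -- Hahn-Banach extension from the trivial subspace.
  have hN0 : (0 : ℝ) ≤ N 0 := by
    have h5 := hNlb 0
    rwa [neg_zero, gauge_zero, neg_zero] at h5
  obtain ⟨ψ, -, hψ⟩ := exists_extension_of_le_sublinear ⟨⊥, 0⟩ N hNhom hNadd (by
    rintro ⟨x, hx⟩
    have hx0 : x = 0 := (Submodule.mem_bot ℝ).mp hx
    subst hx0
    simpa using hN0)
  have hψgauge : ∀ x, ψ x ≤ gauge U x := fun x => (hψ x).trans (hNgauge x)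
  have hψB : ∀ b ∈ B, RCLike.re (f b) - 1 ≤ ψ b := by
    intro b hb
    have hmem : (1 - RCLike.re (f b) : ℝ) ∈ A (-b) := by
      refine ⟨1, zero_le_one, b, ⟨b, hb, one_smul ℝ b⟩, ?_⟩
      rw [neg_add_cancel, gauge_zero]
      ring
    have h6 := (hψ (-b)).trans ((hNle _ _ hmem))
    rw [map_neg] at h6
    linarith
  set gl : X →ₗ[𝕜] 𝕜 := ψ.extendTo𝕜' with hgl
  have hglre : ∀ x, RCLike.re (gl x) = ψ x := fun x => ψ.extendTo𝕜'_apply_re x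
  have hglgauge : ∀ x, ‖gl x‖ ≤ gauge U x := by
    intro x
    rcases eq_or_ne (gl x) 0 with h | h
    · rw [h, norm_zero]
      exact gauge_nonneg x
    · have hsq : ‖gl x‖ ^ 2 = ψ ((starRingEnd 𝕜) (gl x) • x) :=
        ψ.norm_extendTo𝕜'_apply_sq (𝕜 := 𝕜) x
      have h2 : ψ ((starRingEnd 𝕜) (gl x) • x) ≤ ‖gl x‖ * gauge U x := by
        refine (hψgauge _).trans ?_
        have h3 := map_smul_eq_mul (gaugeSeminorm hUbal hUconv hUabs) ((starRingEnd 𝕜) (gl x)) x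
        rw [gaugeSeminorm_toFun, gaugeSeminorm_toFun] at h3
        rw [h3, RCLike.norm_conj]
      have hpos : 0 < ‖gl x‖ := norm_pos_iff.mpr h
      nlinarith [hsq, h2]
  have hre : ∀ b ∈ B, RCLike.re (f b - gl b) ≤ 1 := by
    intro b hb
    rw [map_sub, hglre]
    have := hψB b hb
    linarith
  have hglB : ∀ b ∈ B, ‖f b - gl b‖ ≤ 1 := by
    intro b hb
    rcases eq_or_ne (f b - gl b) 0 with h | h
    · rw [h, norm_zero]; exact zero_le_one
    · set z : 𝕜 := f b - gl b with hz
      set c : 𝕜 := (starRingEnd 𝕜) z / (‖z‖ : 𝕜) with hc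
      have hznorm : (0 : ℝ) < ‖z‖ := norm_pos_iff.mpr h
      have hcnorm : ‖c‖ = 1 := by
        rw [hc, norm_div, RCLike.norm_conj, RCLike.norm_ofReal, abs_of_nonneg hznorm.le]
        field_simp
      have hcb : c • b ∈ B := hBbal.smul_mem (le_of_eq hcnorm) hb
      have hcz : c * z = (‖z‖ : 𝕜) := by
        rw [hc, div_mul_eq_mul_div, RCLike.conj_mul]
        rw [div_eq_iff (by exact_mod_cast hznorm.ne')]
        push_cast [sq]
        ring
      have h3 := hre _ hcb
      have h4 : f (c • b) - gl (c • b) = c * z := by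
        rw [map_smul, map_smul, smul_eq_mul, smul_eq_mul, hz]
        ring
      rw [h4, hcz, RCLike.ofReal_re] at h3
      exact h3
  refine ⟨gl, ?_, hglB⟩
  have h0 : ContinuousAt (gl : X → 𝕜) 0 := by
    rw [ContinuousAt, map_zero, NormedAddCommGroup.tendsto_nhds_zero]
    intro ε hε
    have hcne : algebraMap ℝ 𝕜 (ε / 2) ≠ 0 := by
      rw [← norm_ne_zero_iff, norm_algebraMap', Real.norm_eq_abs, abs_of_pos (by positivity)]
      positivity
    have hV : algebraMap ℝ 𝕜 (ε / 2) • U ∈ @nhds X tt 0 :=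
      (set_smul_mem_nhds_zero_iff hcne).mpr hU0
    filter_upwards [hV] with x hx
    obtain ⟨u, hu, rfl⟩ := hx
    have hg1 : gauge U (algebraMap ℝ 𝕜 (ε / 2) • u) ≤ ε / 2 := by
      rw [algebraMap_smul]
      exact gauge_le_of_mem (by positivity) ⟨u, hu, rfl⟩
    calc ‖gl _‖ ≤ gauge U _ := hglgauge _
      _ ≤ ε / 2 := hg1
      _ < ε := by linarith
  exact continuous_of_continuousAt_zero gl h0

end Core

/-- Under condition (BτBγ̃), if a bornological locally convex Hausdorff
space `(X, τ)` satisfies (BBCl) for `τ̃`, then `(X, γ̃)'` is the closure of `(X, τ̃)'` in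
`(X, τ)'_b`. -/
theorem statement11 {𝕜 : Type u} [RCLike 𝕜]
    {X : Type v} [AddCommGroup X] [Module 𝕜 X] [Module ℝ X] [IsScalarTower ℝ 𝕜 X]
    (t tt g : TopologicalSpace X) (hborn : Bornological 𝕜 X t)
    (ht : IsLCH 𝕜 X t) (htt : IsLCH 𝕜 X tt) (hg : IsGamma 𝕜 X t tt g)
    (hBtB : ∀ s : Set X, VNB 𝕜 X t s ↔ VNB 𝕜 X g s)
    (hbbcl : BBCl 𝕜 X t tt) :
    (∀ f : X →ₗ[𝕜] 𝕜, f ∈ dualSub 𝕜 X g → f ∈ dualSub 𝕜 X t) ∧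
    (∀ f : X →ₗ[𝕜] 𝕜, f ∈ dualSub 𝕜 X tt → f ∈ dualSub 𝕜 X t) ∧
    {f : ↥(dualSub 𝕜 X t) | (f : X →ₗ[𝕜] 𝕜) ∈ dualSub 𝕜 X g} =
      @closure _ (strongDualTop 𝕜 X t)
        {f : ↥(dualSub 𝕜 X t) | (f : X →ₗ[𝕜] 𝕜) ∈ dualSub 𝕜 X tt} := by
  classical
  have part1 : ∀ f : X →ₗ[𝕜] 𝕜, f ∈ dualSub 𝕜 X g → f ∈ dualSub 𝕜 X t := fun f hf =>
    cont_t_of_cont_g hborn hBtB f hf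
  have hgle : g ≤ tt := hg.2.2 tt htt fun s _ => rfl
  have part2' : ∀ f : X →ₗ[𝕜] 𝕜, @Continuous X 𝕜 tt _ f → @Continuous X 𝕜 g _ f :=
    fun f hf => continuous_le_dom hgle hf
  have part2 : ∀ f : X →ₗ[𝕜] 𝕜, f ∈ dualSub 𝕜 X tt → f ∈ dualSub 𝕜 X t := fun f hf =>
    part1 f (part2' f hf)
  refine ⟨part1, part2, ?_⟩
  have h𝔖ne : ({s : Set X | VNB 𝕜 X t s}).Nonempty := ⟨∅, show VNB 𝕜 X t ∅ from (by letI := t; exact Bornology.isVonNBounded_empty 𝕜 X)⟩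
  have h𝔖dir : DirectedOn (· ⊆ ·) {s : Set X | VNB 𝕜 X t s} := fun a ha b hb =>
    ⟨a ∪ b, show VNB 𝕜 X t (a ∪ b) from (by letI := t; exact Bornology.IsVonNBounded.union ha hb), subset_union_left, subset_union_right⟩
  set φ : ↥(dualSub 𝕜 X t) → (UniformOnFun X 𝕜 {s : Set X | VNB 𝕜 X t s}) :=
    fun f => UniformOnFun.ofFun {s : Set X | VNB 𝕜 X t s} ((f : X →ₗ[𝕜] 𝕜) : X → 𝕜) with hφ
  letI tU : TopologicalSpace (UniformOnFun X 𝕜 {s : Set X | VNB 𝕜 X t s}) :=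
    UniformOnFun.topologicalSpace X 𝕜 {s : Set X | VNB 𝕜 X t s}
  have htD : strongDualTop 𝕜 X t = TopologicalSpace.induced φ tU := by
    show TopologicalSpace.induced _ (funUC 𝕜 X _) = _
    rw [funUC, induced_compose]
    rfl
  ext F
  simp only [Set.mem_setOf_eq]
  constructor
  · -- a `γ̃`-continuous functional is in the closure
    intro hFg
    rw [htD]
    letI tI := TopologicalSpace.induced φ tU
    rw [mem_closure_iff_nhds]
    intro V hV
    rw [nhds_induced] at hV
    obtain ⟨W, hW, hWV⟩ := hV
    rw [(UniformOnFun.hasBasis_nhds X 𝕜 {s : Set X | VNB 𝕜 X t s} (φ F) h𝔖ne h𝔖dir).mem_iff]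
      at hW
    obtain ⟨⟨S, Vu⟩, ⟨hS𝔖, hVu⟩, hgen⟩ := hW
    obtain ⟨ε, hε, hεsub⟩ := Metric.mem_uniformity_dist.mp hVu
    have hsing : VNB 𝕜 X t {(0 : X)} := by
      letI := t
      haveI := ht.csmul
      exact Bornology.isVonNBounded_singleton 0
    obtain ⟨B, hSB, ⟨hBbal, hBconv⟩, hBbdd, -⟩ :=
      hbbcl (S ∪ {0}) (show VNB 𝕜 X t (S ∪ {0}) from (by letI := t; exact Bornology.IsVonNBounded.union hS𝔖 hsing))
    have hB0 : (0 : X) ∈ B := hSB (Or.inr rfl)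
    have hFcontB : @ContinuousOn X 𝕜 tt _ ((F : X →ₗ[𝕜] 𝕜) : X → 𝕜) B :=
      contOn_tt_of_gamma hg hFg hBbdd
    -- work in the `tt` topology
    letI := tt
    haveI := htt.tag
    haveI := htt.csmul
    haveI := htt.lcs
    have hcw : ContinuousWithinAt (((F : X →ₗ[𝕜] 𝕜)) : X → 𝕜) B 0 := hFcontB 0 hB0
    have hball : {z : 𝕜 | ‖z‖ < ε / 2} ∈ 𝓝 ((F : X →ₗ[𝕜] 𝕜) 0) := by
      rw [map_zero]
      have hb2 := Metric.ball_mem_nhds (0 : 𝕜) (half_pos hε)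
      have : Metric.ball (0 : 𝕜) (ε / 2) = {z : 𝕜 | ‖z‖ < ε / 2} := by
        ext z
        simp [Metric.mem_ball, dist_zero_right]
      rwa [this] at hb2
    have hpre := hcw hball
    rw [mem_map, mem_nhdsWithin] at hpre
    obtain ⟨U₀, hU₀open, hU₀mem, hU₀sub⟩ := hpre
    obtain ⟨U, ⟨hUnhds, hUbal, hUconv⟩, hUsub⟩ : ∃ U : Set X,
        (U ∈ 𝓝 (0 : X) ∧ Balanced 𝕜 U ∧ Convex ℝ U) ∧ id U ⊆ U₀ := by
      obtain ⟨W, ⟨hWn, hWc⟩, hWsub⟩ :=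
        (LocallyConvexSpace.convex_basis_zero ℝ X).mem_iff.mp (hU₀open.mem_nhds hU₀mem)
      refine ⟨balancedCore 𝕜 W, ⟨balancedCore_mem_nhds_zero hWn, balancedCore_balanced W, ?_⟩,
        (balancedCore_subset W).trans hWsub⟩
      rw [balancedCore_eq_iInter (mem_of_mem_nhds hWn)]
      refine convex_iInter fun r => convex_iInter fun _ => ?_
      exact hWc.linear_image ((r • LinearMap.id : X →ₗ[𝕜] X).restrictScalars ℝ)
    set c : 𝕜 := algebraMap ℝ 𝕜 (ε / 2) with hcdef
    have hcnorm : ‖c‖ = ε / 2 := by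
      rw [hcdef, norm_algebraMap', Real.norm_eq_abs, abs_of_pos (half_pos hε)]
    have hcne : c ≠ 0 := by
      rw [← norm_ne_zero_iff, hcnorm]
      positivity
    set f1 : X →ₗ[𝕜] 𝕜 := c⁻¹ • (F : X →ₗ[𝕜] 𝕜) with hf1def
    have hf1 : ∀ x ∈ U ∩ B, ‖f1 x‖ ≤ 1 := by
      rintro x ⟨hxU, hxB⟩
      have hx : x ∈ (((F : X →ₗ[𝕜] 𝕜)) : X → 𝕜) ⁻¹' {z : 𝕜 | ‖z‖ < ε / 2} :=
        hU₀sub ⟨hUsub hxU, hxB⟩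
      have hx' : ‖(F : X →ₗ[𝕜] 𝕜) x‖ < ε / 2 := hx
      rw [hf1def, LinearMap.smul_apply, smul_eq_mul, norm_mul, norm_inv, hcnorm]
      rw [inv_mul_le_iff₀ (half_pos hε), mul_one]
      exact hx'.le
    obtain ⟨gl1, hgl1cont, hgl1B⟩ :=
      approx_core htt hUnhds hUbal hUconv hBbal hBconv hB0 f1 hf1
    set gl : X →ₗ[𝕜] 𝕜 := c • gl1 with hgldef
    have hglcont_tt : @Continuous X 𝕜 tt _ (gl : X → 𝕜) := by
      have := hgl1cont.const_smul c
      refine this.congr fun x => ?_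
      rw [hgldef, LinearMap.smul_apply]
      rfl
    have hglt : gl ∈ dualSub 𝕜 X t := part2 gl hglcont_tt
    refine ⟨⟨gl, hglt⟩, hWV ?_, hglcont_tt⟩
    refine hgen ?_
    intro x hxS
    have hxB : x ∈ B := hSB (Or.inl hxS)
    have hdiff : (F : X →ₗ[𝕜] 𝕜) x - gl x = c • (f1 x - gl1 x) := by
      rw [hf1def, hgldef, LinearMap.smul_apply, LinearMap.smul_apply, smul_sub,
        smul_inv_smul₀ hcne]
    refine hεsub ?_
    rw [dist_eq_norm]
    have hnorm1 : ‖(F : X →ₗ[𝕜] 𝕜) x - gl x‖ ≤ ε / 2 := by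
      rw [hdiff, norm_smul, hcnorm]
      calc ε / 2 * ‖f1 x - gl1 x‖ ≤ ε / 2 * 1 :=
        mul_le_mul_of_nonneg_left (hgl1B x hxB) (half_pos hε).le
        _ = ε / 2 := mul_one _
    calc ‖gl x - (F : X →ₗ[𝕜] 𝕜) x‖ = ‖(F : X →ₗ[𝕜] 𝕜) x - gl x‖ := norm_sub_rev _ _
      _ ≤ ε / 2 := hnorm1
      _ < ε := by linarith
  · -- the closure is contained in the `γ̃`-dual
    intro hFcl
    have hne : (@nhdsWithin _ (strongDualTop 𝕜 X t) F
        {f : ↥(dualSub 𝕜 X t) | (f : X →ₗ[𝕜] 𝕜) ∈ dualSub 𝕜 X tt}).NeBot := by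
      letI := strongDualTop 𝕜 X t
      exact mem_closure_iff_nhdsWithin_neBot.mp hFcl
    have htend : Filter.Tendsto φ
        (@nhdsWithin _ (strongDualTop 𝕜 X t) F
          {f : ↥(dualSub 𝕜 X t) | (f : X →ₗ[𝕜] 𝕜) ∈ dualSub 𝕜 X tt})
        (@nhds _ tU (φ F)) := by
      letI := strongDualTop 𝕜 X t
      have h1 : Filter.Tendsto φ (@nhds _ (strongDualTop 𝕜 X t) F) (@nhds _ tU (φ F)) := by
        rw [htD, nhds_induced]
        exact tendsto_comap
      exact h1.mono_left nhdsWithin_le_nhds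
    have hContOn : ∀ s : Set X, VNB 𝕜 X t s →
        @ContinuousOn X 𝕜 tt _ ((F : X →ₗ[𝕜] 𝕜) : X → 𝕜) s := by
      intro s hs
      have hUnif := (UniformOnFun.tendsto_iff_tendstoUniformlyOn.mp htend) s hs
      letI := tt
      haveI := hne
      refine hUnif.continuousOn ?_
      refine (Filter.eventually_iff_exists_mem.mpr ⟨_, @self_mem_nhdsWithin _ (strongDualTop 𝕜 X t) F _, ?_⟩).frequently
      intro h hh
      exact Continuous.continuousOn (hh : @Continuous X 𝕜 tt _ _)
    exact continuous_gamma_of_contOn hg _ hContOn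
end
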